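/- arXiv:math/0605455 — 2 statements merged into one kernel-verified Lean document; each statement's English description precedes it below -/
import Mathlib

section
/- Let ℓ ≥ 6 be an integer and m ≥ 1. Let λ = [λ₁,λ₂] be a Young diagram in Λ(m,ℓ) and set ν₁ = 2λ₁ − m. Then the number of oscillating tableaux in 𝒪_ℓ(m,[ν₁]) equals the binomial coefficient C(|𝒯_ℓ(λ)| + 1, 2). -/
/-- `AddBox μ ν` means `ν` is obtained from `μ` by adding a single box (`μ → ν`). -/
def AddBox (μ ν : YoungDiagram) : Prop := μ ≤ ν ∧ ν.card = μ.card + 1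

/-- `AdjBox μ ν` means `μ ↔ ν`, i.e. the diagrams differ by a single box. -/
def AdjBox (μ ν : YoungDiagram) : Prop := AddBox μ ν ∨ AddBox ν μ

/-- `RowsEq μ L` means the row lengths of `μ` are given by the list `L`
(rows beyond the length of `L` being empty). -/
def RowsEq (μ : YoungDiagram) (L : List ℕ) : Prop := ∀ i, μ.rowLen i = L.getD i 0

/-- `Λ(j,ℓ)`: Young diagrams of size `j` with at most two rows whose
row difference is at most `ℓ - 2`. -/
def LambdaSet (j ℓ : ℕ) : Set YoungDiagram :=
  {μ | μ.card = j ∧ μ.rowLen 2 = 0 ∧ μ.rowLen 0 - μ.rowLen 1 ≤ ℓ - 2}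

/-- `Γ(ℓ)` for a finite `ℓ ≥ 6`. -/
def GammaSet (ℓ : ℕ) : Set YoungDiagram :=
  {μ | μ.colLen 0 + μ.colLen 1 ≤ 4 ∧ μ.rowLen 0 + μ.rowLen 1 ≤ ℓ - 2}
    ∪ {μ | RowsEq μ [ℓ - 2, 1, 1]}

/-- `Γ(∞)`: diagrams whose first two column lengths sum to at most `4`. -/
def GammaInf : Set YoungDiagram := {μ | μ.colLen 0 + μ.colLen 1 ≤ 4}

/-- A Young-tableau path of length `m`, with the `j`-th shape restricted to lie in `P j`. -/
def IsTabPath (P : ℕ → Set YoungDiagram) (m : ℕ) (f : Fin (m + 1) → YoungDiagram) : Prop :=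
  f 0 = ⊥ ∧ (∀ j : Fin m, AddBox (f j.castSucc) (f j.succ)) ∧
    ∀ j : Fin (m + 1), f j ∈ P (j : ℕ)

/-- An oscillating-tableau path of length `m` with all shapes in `Γ`. -/
def IsOscPath (Γ : Set YoungDiagram) (m : ℕ) (f : Fin (m + 1) → YoungDiagram) : Prop :=
  f 0 = ⊥ ∧ (∀ j : Fin m, AdjBox (f j.castSucc) (f j.succ)) ∧
    ∀ j : Fin (m + 1), f j ∈ Γ

/-- The number of Young tableaux (paths) of length `m`, with shapes restricted by `P`,
whose final shape has row lengths `L`. -/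
noncomputable def tabCount (P : ℕ → Set YoungDiagram) (m : ℕ) (L : List ℕ) : ℕ :=
  Nat.card {f : Fin (m + 1) → YoungDiagram //
    IsTabPath P m f ∧ RowsEq (f (Fin.last m)) L}

/-- The number of oscillating tableaux of length `m` with shapes in `Γ`
whose final shape has row lengths `L`. -/
noncomputable def oscCount (Γ : Set YoungDiagram) (m : ℕ) (L : List ℕ) : ℕ :=
  Nat.card {f : Fin (m + 1) → YoungDiagram //
    IsOscPath Γ m f ∧ RowsEq (f (Fin.last m)) L}

/-- The number of oscillating tableaux of length `m` with shapes in `Γ` and final shape `ν`. -/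
noncomputable def oscCountD (Γ : Set YoungDiagram) (m : ℕ) (ν : YoungDiagram) : ℕ :=
  Nat.card {f : Fin (m + 1) → YoungDiagram //
    IsOscPath Γ m f ∧ f (Fin.last m) = ν}

namespace OT
open YoungDiagram

lemma yd_ext {μ ν : YoungDiagram} (h : ∀ i, μ.rowLen i = ν.rowLen i) : μ = ν := by
  ext ⟨i, j⟩
  simp only [YoungDiagram.mem_cells, mem_iff_lt_rowLen, h]

lemma yd_le_iff {μ ν : YoungDiagram} : μ ≤ ν ↔ ∀ i, μ.rowLen i ≤ ν.rowLen i := by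
  constructor
  · intro h i
    by_contra hc
    push_neg at hc
    have h1 : (i, ν.rowLen i) ∈ μ := mem_iff_lt_rowLen.2 hc
    have h2 : (i, ν.rowLen i) ∈ ν := h h1
    rw [mem_iff_lt_rowLen] at h2
    omega
  · intro h ⟨i, j⟩ hm
    have hm' : (i, j) ∈ μ := hm
    exact mem_iff_lt_rowLen.2 (lt_of_lt_of_le (mem_iff_lt_rowLen.1 hm') (h i))

lemma colLen_le_iff {μ : YoungDiagram} {j k : ℕ} : μ.colLen j ≤ k ↔ μ.rowLen k ≤ j := by
  rw [← not_lt, ← mem_iff_lt_colLen, mem_iff_lt_rowLen, not_lt]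

lemma lt_colLen_iff {μ : YoungDiagram} {j k : ℕ} : k < μ.colLen j ↔ j < μ.rowLen k := by
  rw [← mem_iff_lt_colLen, mem_iff_lt_rowLen]

lemma sorted4 {w x y z : ℕ} (h1 : x ≤ w) (h2 : y ≤ x) (h3 : z ≤ y) :
    List.SortedGE [w, x, y, z] := by
  rw [List.sortedGE_iff_pairwise, List.pairwise_cons, List.pairwise_cons, List.pairwise_cons]
  refine ⟨?_, ?_, ?_, List.pairwise_singleton _ _⟩ <;> intro u hu <;> simp only [List.mem_cons,
    List.mem_singleton, List.not_mem_nil, or_false] at hu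
  · rcases hu with rfl|rfl|rfl <;> omega
  · rcases hu with rfl|rfl <;> omega
  · rcases hu with rfl; omega

def sh (a b c d : ℕ) : YoungDiagram :=
  ofRowLens [a, min a b, min (min a b) c, min (min (min a b) c) d]
    (sorted4 (min_le_left _ _) (min_le_left _ _) (min_le_left _ _))

lemma mem_sh {a b c d : ℕ} (h1 : b ≤ a) (h2 : c ≤ b) (h3 : d ≤ c) {i j : ℕ} :
    ((i, j) ∈ sh a b c d) ↔ j < [a, b, c, d].getD i 0 := by
  have e1 : min a b = b := min_eq_right h1
  have e2 : min b c = c := min_eq_right h2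
  have e3 : min c d = d := min_eq_right h3
  rw [sh, mem_ofRowLens]
  rcases i with _|_|_|_|i <;>
    simp [e1, e2, e3, List.getD] <;> omega

lemma rowLen_sh {a b c d : ℕ} (h1 : b ≤ a) (h2 : c ≤ b) (h3 : d ≤ c) (i : ℕ) :
    (sh a b c d).rowLen i = [a, b, c, d].getD i 0 := by
  have h4 : ∀ j, j < (sh a b c d).rowLen i ↔ j < [a, b, c, d].getD i 0 := fun j =>
    (mem_iff_lt_rowLen (μ := sh a b c d)).symm.trans (mem_sh h1 h2 h3)
  have := h4 ((sh a b c d).rowLen i)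
  have := h4 ([a, b, c, d].getD i 0)
  omega

lemma card_cellsOfRowLens : ∀ w : List ℕ, (YoungDiagram.cellsOfRowLens w).card = w.sum := by
  intro w
  induction w with
  | nil => simp [YoungDiagram.cellsOfRowLens]
  | cons hd tl ih =>
    rw [YoungDiagram.cellsOfRowLens, Finset.card_union_of_disjoint, Finset.card_map, ih]
    · simp [List.sum_cons]
    · rw [Finset.disjoint_left]
      rintro ⟨x, y⟩ hx hy
      simp only [Finset.mem_product, Finset.mem_singleton] at hx
      simp only [Finset.mem_map, Function.Embedding.coe_prodMap] at hy
      obtain ⟨⟨u, v⟩, _, he⟩ := hy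
      simp only [Prod.mk.injEq, Prod.map] at he
      obtain ⟨he1, -⟩ := he
      simp only [Function.Embedding.coeFn_mk] at he1
      omega

lemma card_sh {a b c d : ℕ} (h1 : b ≤ a) (h2 : c ≤ b) (h3 : d ≤ c) :
    (sh a b c d).card = a + b + c + d := by
  have e1 : min a b = b := min_eq_right h1
  have e2 : min b c = c := min_eq_right h2
  have e3 : min c d = d := min_eq_right h3
  show (sh a b c d).cells.card = _
  rw [sh]
  show (YoungDiagram.cellsOfRowLens _).card = _
  rw [card_cellsOfRowLens]
  simp [e1, e2, e3]
  omega

lemma rowLen_bot (i : ℕ) : (⊥ : YoungDiagram).rowLen i = 0 := by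
  by_contra h
  exact YoungDiagram.notMem_bot (i, 0) (mem_iff_lt_rowLen.2 (by omega))

lemma sh_zero : sh 0 0 0 0 = (⊥ : YoungDiagram) := by
  apply yd_ext
  intro i
  rw [rowLen_sh le_rfl le_rfl le_rfl, rowLen_bot]
  rcases i with _|_|_|_|i <;> simp [List.getD]


def dd (ℓ : ℕ) : ℕ → ℕ → ℕ
  | 0, x => if x = 0 then 1 else 0
  | m + 1, 0 => dd ℓ m 1
  | m + 1, x + 1 => if ℓ - 2 < x + 1 then 0 else dd ℓ m x + dd ℓ m (x + 2)

lemma dd_wall {ℓ m x : ℕ} (h : ℓ - 2 < x) : dd ℓ m x = 0 := by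
  match m, x with
  | 0, x => simp [dd]; omega
  | m + 1, 0 => omega
  | m + 1, x + 1 => simp [dd, h]

lemma dd_big {ℓ : ℕ} : ∀ {m x : ℕ}, m < x → dd ℓ m x = 0 := by
  intro m
  induction m with
  | zero => intro x h; simp [dd]; omega
  | succ m ih =>
    intro x h
    match x, h with
    | x + 1, h =>
      rw [dd]
      split_ifs with h1
      · rfl
      · rw [ih (by omega), ih (by omega)]

lemma dd_succ_zero (ℓ m : ℕ) : dd ℓ (m + 1) 0 = dd ℓ m 1 := rfl

lemma dd_succ_succ {ℓ x : ℕ} (m : ℕ) (h : x + 1 ≤ ℓ - 2) :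
    dd ℓ (m + 1) (x + 1) = dd ℓ m x + dd ℓ m (x + 2) := by
  rw [dd, if_neg (by omega)]

lemma dd_zero_zero (ℓ : ℕ) : dd ℓ 0 0 = 1 := rfl

lemma dd_zero_pos (ℓ : ℕ) {x : ℕ} (h : 0 < x) : dd ℓ 0 x = 0 := by
  simp [dd]; omega

lemma ch2 (n : ℕ) : Nat.choose (n + 1) 2 = Nat.choose n 2 + n := by
  rw [Nat.choose_succ_succ, Nat.choose_one_right, Nat.add_comm]

lemma chooseA (u v : ℕ) : Nat.choose (u + v) 2 = Nat.choose u 2 + Nat.choose v 2 + u * v := by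
  induction v with
  | zero => simp
  | succ v ih =>
    rw [show u + (v + 1) = (u + v) + 1 by omega, ch2, ih, ch2]
    ring

lemma chooseG (u v : ℕ) :
    Nat.choose (u + v + 1) 2 = Nat.choose (u + 1) 2 + Nat.choose (v + 1) 2 + u * v := by
  rw [show u + v + 1 = (u + 1) + v by omega, chooseA]
  have : (u + 1) * v = u * v + v := by ring
  rw [this, ch2 v]
  omega

lemma chooseSq (u : ℕ) : Nat.choose (u + 1) 2 + Nat.choose u 2 = u * u := by
  induction u with
  | zero => simp
  | succ u ih =>
    rw [ch2 (u + 1), ch2 u]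
    rw [ch2 u] at ih
    have e : (u + 1) * (u + 1) = u * u + 2 * u + 1 := by ring
    omega

lemma choose_one_two : Nat.choose 1 2 = 0 := rfl


lemma cell_lt_of_card_le {μ : YoungDiagram} {n i j : ℕ} (h : μ.card ≤ n)
    (hm : (i, j) ∈ μ) : i < n ∧ j < n := by
  constructor
  · have hsub : Finset.range (i+1) ×ˢ ({j} : Finset ℕ) ⊆ μ.cells := by
      rintro ⟨x, y⟩ hx
      simp only [Finset.mem_product, Finset.mem_range, Finset.mem_singleton] at hx
      exact μ.up_left_mem (by omega) (le_of_eq hx.2) hm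
    have := Finset.card_le_card hsub
    simp only [Finset.card_product, Finset.card_range, Finset.card_singleton] at this
    have : i + 1 ≤ μ.card := by simpa using this
    omega
  · have hsub : ({i} : Finset ℕ) ×ˢ Finset.range (j+1) ⊆ μ.cells := by
      rintro ⟨x, y⟩ hx
      simp only [Finset.mem_product, Finset.mem_range, Finset.mem_singleton] at hx
      exact μ.up_left_mem (le_of_eq hx.1) (by omega) hm
    have := Finset.card_le_card hsub
    simp only [Finset.card_product, Finset.card_range, Finset.card_singleton] at this
    have : j + 1 ≤ μ.card := by simpa using this
    omega

lemma finite_card_le (n : ℕ) : {μ : YoungDiagram | μ.card ≤ n}.Finite := by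
  have himg : (YoungDiagram.cells '' {μ : YoungDiagram | μ.card ≤ n}).Finite := by
    apply Set.Finite.subset (((Finset.range n ×ˢ Finset.range n).powerset).finite_toSet)
    rintro s ⟨μ, hμ, rfl⟩
    simp only [Finset.coe_powerset, Set.mem_preimage, Set.mem_powerset_iff, Finset.coe_subset]
    intro c hc
    obtain ⟨i, j⟩ := c
    have := cell_lt_of_card_le hμ (by exact hc)
    simp only [Finset.mem_product, Finset.mem_range]
    exact this
  exact Set.Finite.of_finite_image himg (fun μ _ ν _ h => by cases μ; cases ν; simpa using h)

/-- Generic path predicate. -/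
def Path (R : YoungDiagram → YoungDiagram → Prop) (Q : ℕ → Set YoungDiagram) (m : ℕ)
    (ν : YoungDiagram) (f : Fin (m + 1) → YoungDiagram) : Prop :=
  f 0 = ⊥ ∧ (∀ j : Fin m, R (f j.castSucc) (f j.succ)) ∧
    (∀ j : Fin (m + 1), f j ∈ Q (j : ℕ)) ∧ f (Fin.last m) = ν

noncomputable def PC (R : YoungDiagram → YoungDiagram → Prop) (Q : ℕ → Set YoungDiagram)
    (m : ℕ) (ν : YoungDiagram) : ℕ :=
  Nat.card {f : Fin (m + 1) → YoungDiagram // Path R Q m ν f}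

lemma path_card_bound {R Q m ν} (hR : ∀ μ₁ μ₂, R μ₁ μ₂ → μ₂.card ≤ μ₁.card + 1)
    {f : Fin (m + 1) → YoungDiagram} (hf : Path R Q m ν f) (j : Fin (m + 1)) :
    (f j).card ≤ m := by
  suffices h : ∀ k (hk : k < m + 1), (f ⟨k, hk⟩).card ≤ k by
    have := h j.1 j.2
    have h2 : (⟨j.1, j.2⟩ : Fin (m+1)) = j := rfl
    rw [h2] at this
    omega
  intro k
  induction k with
  | zero =>
    intro hk
    have : (⟨0, hk⟩ : Fin (m+1)) = 0 := rfl
    rw [this, hf.1]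
    simp [YoungDiagram.card]
  | succ k ih =>
    intro hk
    have hk' : k < m := by omega
    have hstep := hf.2.1 ⟨k, hk'⟩
    have e1 : (⟨k, hk'⟩ : Fin m).castSucc = ⟨k, by omega⟩ := rfl
    have e2 : (⟨k, hk'⟩ : Fin m).succ = ⟨k + 1, hk⟩ := rfl
    rw [e1, e2] at hstep
    have := hR _ _ hstep
    have := ih (by omega)
    omega

lemma finite_path {R Q m ν} (hR : ∀ μ₁ μ₂, R μ₁ μ₂ → μ₂.card ≤ μ₁.card + 1) :
    Finite {f : Fin (m + 1) → YoungDiagram // Path R Q m ν f} := by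
  have hfin : Finite {μ : YoungDiagram // μ.card ≤ m} := (finite_card_le m).to_subtype
  apply Finite.of_injective
    (f := fun g : {f : Fin (m + 1) → YoungDiagram // Path R Q m ν f} =>
      (fun j => (⟨g.1 j, path_card_bound hR g.2 j⟩ : {μ : YoungDiagram // μ.card ≤ m})))
  intro g₁ g₂ h
  ext j : 2
  exact congrArg Subtype.val (congrFun h j)

open scoped Classical in
lemma PC_zero {R Q ν} (h0 : (⊥ : YoungDiagram) ∈ Q 0) :
    PC R Q 0 ν = if ν = ⊥ then 1 else 0 := by
  split_ifs with h
  · subst h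
    refine Nat.card_eq_one_iff_unique.2 ⟨⟨fun a b => ?_⟩, ⟨⟨fun _ => ⊥, rfl, fun j => j.elim0,
      fun j => by simpa [Fin.val_eq_zero j] using h0, rfl⟩⟩⟩
    apply Subtype.ext
    funext j
    have hj : j = 0 := by omega
    rw [hj, a.2.1, b.2.1]
  · have : IsEmpty {f : Fin 1 → YoungDiagram // Path R Q 0 ν f} := by
      refine ⟨fun x => h ?_⟩
      have h1 := x.2.1
      have h2 := x.2.2.2.2
      rw [show (Fin.last 0) = 0 from rfl, h1] at h2
      exact h2.symm
    simp [PC, Nat.card_of_isEmpty]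

lemma PC_notmem {R Q m ν} (h : ν ∉ Q m) : PC R Q m ν = 0 := by
  have : IsEmpty {f : Fin (m + 1) → YoungDiagram // Path R Q m ν f} := by
    refine ⟨fun x => h ?_⟩
    have h1 := x.2.2.2.1 (Fin.last m)
    rw [x.2.2.2.2, Fin.val_last] at h1
    exact h1
  simp [PC, Nat.card_of_isEmpty]

lemma card_fiber_sum {α : Type} [Finite α] (g : α → YoungDiagram)
    (S : Finset YoungDiagram) (h : ∀ a, g a ∈ S) :
    Nat.card α = ∑ μ ∈ S, Nat.card {a : α // g a = μ} := by
  classical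
  cases nonempty_fintype α
  rw [Nat.card_eq_fintype_card, ← Finset.card_univ,
    Finset.card_eq_sum_card_fiberwise (fun a _ => h a)]
  refine Finset.sum_congr rfl fun μ _ => ?_
  rw [Nat.card_eq_fintype_card, Fintype.card_subtype]

open scoped Classical in
lemma PC_step {R : YoungDiagram → YoungDiagram → Prop} {Q : ℕ → Set YoungDiagram} {m : ℕ}
    {ν : YoungDiagram} (S : Finset YoungDiagram)
    [∀ m' ν', Finite {f : Fin (m' + 1) → YoungDiagram // Path R Q m' ν' f}]
    (hν : ν ∈ Q (m + 1))
    (cover : ∀ μ, R μ ν → μ ∈ Q m → μ ∈ S) :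
    PC R Q (m + 1) ν = ∑ μ ∈ S, if R μ ν ∧ μ ∈ Q m then PC R Q m μ else 0 := by
  rw [PC, card_fiber_sum (fun a => a.1 ((Fin.last m).castSucc)) S (fun a => by
    have hstep := a.2.2.1 (Fin.last m)
    rw [Fin.succ_last, a.2.2.2.2] at hstep
    have hmem := a.2.2.2.1 ((Fin.last m).castSucc)
    simp only [Fin.coe_castSucc, Fin.val_last] at hmem
    exact cover _ hstep hmem)]
  refine Finset.sum_congr rfl fun μ _ => ?_
  split_ifs with hcond
  · -- equiv with paths of length m ending at μ
    rw [PC]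
    apply Nat.card_congr
    refine ⟨fun a => ⟨Fin.init a.1.1, ?_, ?_, ?_, ?_⟩, fun b => ⟨⟨Fin.snoc b.1 ν, ?_, ?_, ?_, ?_⟩, ?_⟩, ?_, ?_⟩
    · -- init: f 0 = ⊥
      have := a.1.2.1
      simpa [Fin.init] using this
    · intro j
      have := a.1.2.2.1 j.castSucc
      simpa only [Fin.init, Fin.succ_castSucc] using this
    · intro j
      have := a.1.2.2.2.1 j.castSucc
      simpa [Fin.init] using this
    · have := a.2
      simpa [Fin.init] using this
    · -- snoc: f 0 = ⊥
      have := b.2.1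
      rw [show (0 : Fin (m+2)) = Fin.castSucc 0 from rfl, Fin.snoc_castSucc]
      exact this
    · intro j
      refine Fin.lastCases ?_ ?_ j
      · rw [Fin.succ_last, Fin.snoc_last, Fin.snoc_castSucc, b.2.2.2.2]
        exact hcond.1
      · intro i
        rw [Fin.succ_castSucc, Fin.snoc_castSucc, Fin.snoc_castSucc]
        exact b.2.2.1 i
    · intro j
      refine Fin.lastCases ?_ ?_ j
      · rw [Fin.snoc_last]
        simpa using hν
      · intro i
        rw [Fin.snoc_castSucc]
        simpa using b.2.2.2.1 i
    · rw [Fin.snoc_last]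
    · simpa using b.2.2.2.2
    · intro a
      apply Subtype.ext
      apply Subtype.ext
      have h := a.1.2.2.2.2
      calc Fin.snoc (Fin.init (a.1.1)) ν
          = Fin.snoc (Fin.init (a.1.1)) (a.1.1 (Fin.last (m+1))) := by rw [h]
        _ = a.1.1 := Fin.snoc_init_self a.1.1
    · intro b
      apply Subtype.ext
      simp [Fin.init_snoc]
  · -- empty
    have : IsEmpty {a : {f // Path R Q (m+1) ν f} // a.1 ((Fin.last m).castSucc) = μ} := by
      refine ⟨fun x => hcond ?_⟩
      have hstep := x.1.2.2.1 (Fin.last m)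
      rw [Fin.succ_last, x.1.2.2.2.2, x.2] at hstep
      have hmem := x.1.2.2.2.1 ((Fin.last m).castSucc)
      rw [x.2] at hmem
      simp only [Fin.coe_castSucc, Fin.val_last] at hmem
      exact ⟨hstep, hmem⟩
    exact Nat.card_of_isEmpty

section Shapes

lemma colLen_anti' (μ : YoungDiagram) : μ.colLen 1 ≤ μ.colLen 0 := μ.colLen_anti 0 1 (by omega)

lemma rowLen_anti4 {μ : YoungDiagram} {i : ℕ} (h : μ.rowLen 4 = 0) (hi : 4 ≤ i) :
    μ.rowLen i = 0 :=
  Nat.le_antisymm (h ▸ μ.rowLen_anti 4 i hi) (Nat.zero_le _)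

lemma eq_sh_of {μ : YoungDiagram} (h4 : μ.rowLen 4 = 0) :
    μ = sh (μ.rowLen 0) (μ.rowLen 1) (μ.rowLen 2) (μ.rowLen 3) := by
  have a1 := μ.rowLen_anti 0 1 (by omega)
  have a2 := μ.rowLen_anti 1 2 (by omega)
  have a3 := μ.rowLen_anti 2 3 (by omega)
  apply yd_ext
  intro i
  rw [rowLen_sh a1 a2 a3]
  rcases i with _|_|_|_|i <;> simp [List.getD]
  exact rowLen_anti4 h4 (by omega)

lemma sh_le_sh {p q r s p' q' r' s' : ℕ} (h1 : q ≤ p) (h2 : r ≤ q) (h3 : s ≤ r)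
    (h1' : q' ≤ p') (h2' : r' ≤ q') (h3' : s' ≤ r') :
    sh p q r s ≤ sh p' q' r' s' ↔ p ≤ p' ∧ q ≤ q' ∧ r ≤ r' ∧ s ≤ s' := by
  rw [yd_le_iff]
  constructor
  · intro h
    have v0 := h 0; have v1 := h 1; have v2 := h 2; have v3 := h 3
    rw [rowLen_sh h1 h2 h3, rowLen_sh h1' h2' h3'] at v0 v1 v2 v3
    simp [List.getD] at v0 v1 v2 v3
    exact ⟨v0, v1, v2, v3⟩
  · rintro ⟨u0, u1, u2, u3⟩ i
    rw [rowLen_sh h1 h2 h3, rowLen_sh h1' h2' h3']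
    rcases i with _|_|_|_|i <;> simp [List.getD] <;> omega

lemma addBox_sh {p q r s p' q' r' s' : ℕ} (h1 : q ≤ p) (h2 : r ≤ q) (h3 : s ≤ r)
    (h1' : q' ≤ p') (h2' : r' ≤ q') (h3' : s' ≤ r') :
    AddBox (sh p q r s) (sh p' q' r' s') ↔
      (p ≤ p' ∧ q ≤ q' ∧ r ≤ r' ∧ s ≤ s') ∧ p' + q' + r' + s' = p + q + r + s + 1 := by
  rw [AddBox, sh_le_sh h1 h2 h3 h1' h2' h3', card_sh h1 h2 h3, card_sh h1' h2' h3']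

lemma sh_eq_sh {p q r s p' q' r' s' : ℕ} (h1 : q ≤ p) (h2 : r ≤ q) (h3 : s ≤ r)
    (h1' : q' ≤ p') (h2' : r' ≤ q') (h3' : s' ≤ r') :
    sh p q r s = sh p' q' r' s' ↔ p = p' ∧ q = q' ∧ r = r' ∧ s = s' := by
  constructor
  · intro h
    have v0 := congrArg (fun μ => YoungDiagram.rowLen μ 0) h
    have v1 := congrArg (fun μ => YoungDiagram.rowLen μ 1) h
    have v2 := congrArg (fun μ => YoungDiagram.rowLen μ 2) h
    have v3 := congrArg (fun μ => YoungDiagram.rowLen μ 3) h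
    simp only [rowLen_sh h1 h2 h3, rowLen_sh h1' h2' h3'] at v0 v1 v2 v3
    simp [List.getD] at v0 v1 v2 v3
    exact ⟨v0, v1, v2, v3⟩
  · rintro ⟨rfl, rfl, rfl, rfl⟩; rfl

lemma rowsEq_iff {μ : YoungDiagram} {x : ℕ} :
    RowsEq μ [ℓ - 2, 1, 1] → μ.rowLen 0 = ℓ - 2 ∧ μ.rowLen 1 = 1 ∧ μ.rowLen 2 = 1 ∧
      μ.rowLen 3 = 0 ∧ μ.rowLen 4 = 0 := by
  intro h
  refine ⟨h 0, h 1, h 2, h 3, h 4⟩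

end Shapes

section Gamma
variable {ℓ : ℕ}

lemma colLen_le_of {μ : YoungDiagram} {j k : ℕ} (h : μ.rowLen k ≤ j) : μ.colLen j ≤ k :=
  colLen_le_iff.2 h

lemma rowLen_sh_eval {a b c d : ℕ} (h1 : b ≤ a) (h2 : c ≤ b) (h3 : d ≤ c) :
    (sh a b c d).rowLen 0 = a ∧ (sh a b c d).rowLen 1 = b ∧ (sh a b c d).rowLen 2 = c ∧
      (sh a b c d).rowLen 3 = d ∧ (sh a b c d).rowLen 4 = 0 := by
  refine ⟨?_, ?_, ?_, ?_, ?_⟩ <;> rw [rowLen_sh h1 h2 h3] <;> simp [List.getD]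

lemma not_rowsEq_special {μ : YoungDiagram} (h : μ.rowLen 2 ≠ 1) :
    ¬ RowsEq μ [ℓ - 2, 1, 1] := fun hre => h (hre 2)

lemma gamma_row (hℓ : 6 ≤ ℓ) (x : ℕ) : sh x 0 0 0 ∈ GammaSet ℓ ↔ x ≤ ℓ - 2 := by
  obtain ⟨e0, e1, e2, e3, e4⟩ := rowLen_sh_eval (a := x) (b := 0) (c := 0) (d := 0)
    (by omega) (by omega) (by omega)
  constructor
  · rintro (⟨-, hrow⟩ | hre)
    · rw [e0, e1] at hrow; omega
    · exact absurd hre (not_rowsEq_special (by omega))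
  · intro hx
    left
    refine ⟨?_, by rw [e0, e1]; omega⟩
    have c0 : (sh x 0 0 0).colLen 0 ≤ 1 := colLen_le_of (by omega)
    have c1 := colLen_anti' (sh x 0 0 0)
    omega

lemma gamma_tworow {a b : ℕ} (hb : 1 ≤ b) (hba : b ≤ a) :
    sh a b 0 0 ∈ GammaSet ℓ ↔ a + b ≤ ℓ - 2 := by
  obtain ⟨e0, e1, e2, e3, e4⟩ := rowLen_sh_eval (a := a) (b := b) (c := 0) (d := 0)
    hba (by omega) (by omega)
  constructor
  · rintro (⟨-, hrow⟩ | hre)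
    · rw [e0, e1] at hrow; omega
    · exact absurd hre (not_rowsEq_special (by omega))
  · intro hx
    left
    refine ⟨?_, by rw [e0, e1]; omega⟩
    have c0 : (sh a b 0 0).colLen 0 ≤ 2 := colLen_le_of (by omega)
    have c1 := colLen_anti' (sh a b 0 0)
    omega

lemma gamma_hook (hℓ : 6 ≤ ℓ) {a : ℕ} (ha : 1 ≤ a) :
    sh a 1 1 0 ∈ GammaSet ℓ ↔ a ≤ ℓ - 2 := by
  obtain ⟨e0, e1, e2, e3, e4⟩ := rowLen_sh_eval (a := a) (b := 1) (c := 1) (d := 0)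
    ha (by omega) (by omega)
  constructor
  · rintro (⟨-, hrow⟩ | hre)
    · rw [e0, e1] at hrow; omega
    · have := (rowsEq_iff (x := 0) hre).1; omega
  · intro hx
    rcases Nat.lt_or_ge a (ℓ - 2) with hlt | hge
    · left
      refine ⟨?_, by rw [e0, e1]; omega⟩
      have c0 : (sh a 1 1 0).colLen 0 ≤ 3 := colLen_le_of (by omega)
      have c1 : (sh a 1 1 0).colLen 1 ≤ 1 := colLen_le_of (by omega)
      omega
    · right
      have hae : a = ℓ - 2 := by omega
      intro i
      subst hae
      rcases i with _|_|_|_|i <;> simp [List.getD, e0, e1, e2, e3]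
      exact rowLen_anti4 e4 (by omega)

lemma gamma_col4 (hℓ : 6 ≤ ℓ) : sh 1 1 1 1 ∈ GammaSet ℓ := by
  obtain ⟨e0, e1, e2, e3, e4⟩ := rowLen_sh_eval (a := 1) (b := 1) (c := 1) (d := 1)
    le_rfl le_rfl le_rfl
  left
  refine ⟨?_, by rw [e0, e1]; omega⟩
  have c0 : (sh 1 1 1 1).colLen 0 ≤ 4 := colLen_le_of (by omega)
  have c1 : (sh 1 1 1 1).colLen 1 ≤ 0 := colLen_le_of (by omega)
  omega

lemma gamma_classify (hℓ : 6 ≤ ℓ) {μ : YoungDiagram} (hμ : μ ∈ GammaSet ℓ) :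
    (∃ x, x ≤ ℓ - 2 ∧ μ = sh x 0 0 0) ∨
    (∃ a b, 1 ≤ b ∧ b ≤ a ∧ a + b ≤ ℓ - 2 ∧ μ = sh a b 0 0) ∨
    (∃ a, 1 ≤ a ∧ a ≤ ℓ - 2 ∧ μ = sh a 1 1 0) ∨ μ = sh 1 1 1 1 := by
  have a1 := μ.rowLen_anti 0 1 (by omega)
  have a2 := μ.rowLen_anti 1 2 (by omega)
  have a3 := μ.rowLen_anti 2 3 (by omega)
  have a4 := μ.rowLen_anti 3 4 (by omega)
  rcases hμ with ⟨h4c, hrow⟩ | hre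
  · have hca := colLen_anti' μ
    have l1 : ∀ k j : ℕ, j < μ.rowLen k → k < μ.colLen j := fun k j h => lt_colLen_iff.2 h
    have f4 : μ.rowLen 4 = 0 := by
      by_contra h
      have := l1 4 0 (by omega)
      omega
    have heq := eq_sh_of f4
    by_cases hr2 : μ.rowLen 2 = 0
    · by_cases hr1 : μ.rowLen 1 = 0
      · left
        exact ⟨μ.rowLen 0, by omega, heq.trans (by rw [hr1, hr2, show μ.rowLen 3 = 0 by omega])⟩
      · right; left
        exact ⟨μ.rowLen 0, μ.rowLen 1, by omega, a1, by omega,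
          heq.trans (by rw [hr2, show μ.rowLen 3 = 0 by omega])⟩
    · have hr2' : μ.rowLen 2 = 1 := by
        by_contra h
        have u1 := l1 2 1 (by omega)
        have u2 := l1 2 0 (by omega)
        omega
      have hr1' : μ.rowLen 1 = 1 := by
        by_contra h
        have u1 := l1 1 1 (by omega)
        have u2 := l1 2 0 (by omega)
        omega
      by_cases hr3 : μ.rowLen 3 = 0
      · right; right; left
        exact ⟨μ.rowLen 0, by omega, by omega, heq.trans (by rw [hr1', hr2', hr3])⟩
      · have hr3' : μ.rowLen 3 = 1 := by omega
        have hr0 : μ.rowLen 0 = 1 := by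
          by_contra h
          have u1 := l1 0 1 (by omega)
          have u2 := l1 3 0 (by omega)
          omega
        right; right; right
        exact heq.trans (by rw [hr0, hr1', hr2', hr3'])
  · obtain ⟨g0, g1, g2, g3, g4⟩ := rowsEq_iff (x := 0) hre
    right; right; left
    refine ⟨ℓ - 2, by omega, le_rfl, ?_⟩
    exact (eq_sh_of g4).trans (by rw [g0, g1, g2, g3])

end Gamma

section Main
variable {ℓ : ℕ}

instance oscFinite (ℓ : ℕ) (m' : ℕ) (ν' : YoungDiagram) :
    Finite {f : Fin (m' + 1) → YoungDiagram // Path AdjBox (fun _ => GammaSet ℓ) m' ν' f} :=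
  finite_path (fun μ₁ μ₂ h => by rcases h with ⟨-, hc⟩ | ⟨-, hc⟩ <;> omega)

/-- Abbreviation for oscillating path counts. -/
noncomputable def OC (ℓ m : ℕ) (ν : YoungDiagram) : ℕ :=
  PC AdjBox (fun _ => GammaSet ℓ) m ν

lemma bot_mem_gamma (hℓ : 6 ≤ ℓ) : (⊥ : YoungDiagram) ∈ GammaSet ℓ := by
  rw [← sh_zero]
  exact (gamma_row hℓ 0).2 (by omega)

lemma sh_eq_bot_iff {x : ℕ} : sh x 0 0 0 = (⊥ : YoungDiagram) ↔ x = 0 := by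
  rw [← sh_zero, sh_eq_sh (by omega) (by omega) (by omega) (by omega) (by omega) (by omega)]
  omega

open scoped Classical in
lemma osc_base (hℓ : 6 ≤ ℓ) :
    (∀ x, OC ℓ 0 (sh x 0 0 0) = Nat.choose (dd ℓ 0 x + 1) 2) ∧
    (∀ a b, 1 ≤ b → b ≤ a → OC ℓ 0 (sh a b 0 0) = dd ℓ 0 (a - b) * dd ℓ 0 (a + b)) ∧
    (∀ a, 1 ≤ a → OC ℓ 0 (sh a 1 1 0) = Nat.choose (dd ℓ 0 a) 2) ∧
    (OC ℓ 0 (sh 1 1 1 1) = Nat.choose (dd ℓ 0 0) 2) := by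
  refine ⟨fun x => ?_, fun a b hb hba => ?_, fun a ha => ?_, ?_⟩ <;>
    rw [OC, PC_zero (R := AdjBox) (Q := fun _ => GammaSet ℓ) (bot_mem_gamma hℓ)]
  · rcases Nat.eq_zero_or_pos x with rfl | hx
    · rw [if_pos (sh_eq_bot_iff.2 rfl), dd_zero_zero]; rfl
    · rw [if_neg (fun h => by have := sh_eq_bot_iff.1 h; omega), dd_zero_pos ℓ hx]; rfl
  · rw [if_neg, dd_zero_pos ℓ (x := a + b) (by omega), Nat.mul_zero]
    intro h
    rw [← sh_zero, sh_eq_sh (by omega) (by omega) (by omega) (by omega)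
      (by omega) (by omega) ] at h
    omega
  · rw [if_neg, dd_zero_pos ℓ (x := a) (by omega)]
    · rfl
    intro h
    rw [← sh_zero, sh_eq_sh (by omega) (by omega) (by omega) (by omega)
      (by omega) (by omega) ] at h
    omega
  · rw [if_neg, dd_zero_zero]
    · rfl
    intro h
    rw [← sh_zero, sh_eq_sh (by omega) (by omega) (by omega) (by omega)
      (by omega) (by omega) ] at h
    omega

end Main

section Steps
variable {ℓ : ℕ}

lemma addBox_sh' {p q r s p' q' r' s' : ℕ}
    (h : q ≤ p ∧ r ≤ q ∧ s ≤ r ∧ q' ≤ p' ∧ r' ≤ q' ∧ s' ≤ r' ∧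
      p ≤ p' ∧ q ≤ q' ∧ r ≤ r' ∧ s ≤ s' ∧ p' + q' + r' + s' = p + q + r + s + 1) :
    AddBox (sh p q r s) (sh p' q' r' s') := by
  obtain ⟨a1, a2, a3, b1, b2, b3, c1, c2, c3, c4, c5⟩ := h
  exact (addBox_sh a1 a2 a3 b1 b2 b3).2 ⟨⟨c1, c2, c3, c4⟩, c5⟩

lemma addBox_sh_out {p q r s p' q' r' s' : ℕ}
    (hs : q ≤ p ∧ r ≤ q ∧ s ≤ r ∧ q' ≤ p' ∧ r' ≤ q' ∧ s' ≤ r')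
    (h : AddBox (sh p q r s) (sh p' q' r' s')) :
    p ≤ p' ∧ q ≤ q' ∧ r ≤ r' ∧ s ≤ s' ∧ p' + q' + r' + s' = p + q + r + s + 1 := by
  obtain ⟨a1, a2, a3, b1, b2, b3⟩ := hs
  have := (addBox_sh a1 a2 a3 b1 b2 b3).1 h
  tauto

lemma sh_eq' {p q r s p' q' r' s' : ℕ}
    (hs : q ≤ p ∧ r ≤ q ∧ s ≤ r ∧ q' ≤ p' ∧ r' ≤ q' ∧ s' ≤ r')
    (he : p = p' ∧ q = q' ∧ r = r' ∧ s = s') : sh p q r s = sh p' q' r' s' := by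
  obtain ⟨rfl, rfl, rfl, rfl⟩ := he
  rfl

lemma sh_eq_out {p q r s p' q' r' s' : ℕ}
    (hs : q ≤ p ∧ r ≤ q ∧ s ≤ r ∧ q' ≤ p' ∧ r' ≤ q' ∧ s' ≤ r')
    (h : sh p q r s = sh p' q' r' s') : p = p' ∧ q = q' ∧ r = r' ∧ s = s' := by
  obtain ⟨a1, a2, a3, b1, b2, b3⟩ := hs
  exact (sh_eq_sh a1 a2 a3 b1 b2 b3).1 h

lemma osc_step_row (hℓ : 6 ≤ ℓ) (m x : ℕ) (hx1 : 1 ≤ x) (hx : x ≤ ℓ - 2)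
    (ihR : ∀ x, OC ℓ m (sh x 0 0 0) = Nat.choose (dd ℓ m x + 1) 2)
    (ihT : ∀ a b, 1 ≤ b → b ≤ a → OC ℓ m (sh a b 0 0) = dd ℓ m (a - b) * dd ℓ m (a + b)) :
    OC ℓ (m + 1) (sh x 0 0 0) = Nat.choose (dd ℓ (m + 1) x + 1) 2 := by
  classical
  rw [OC, PC_step (R := AdjBox) (Q := fun _ => GammaSet ℓ) {sh (x-1) 0 0 0, sh (x+1) 0 0 0, sh x 1 0 0}
    ((gamma_row hℓ x).2 hx) ?cover]
  case cover =>
    intro μ hadj hmem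
    simp only [Finset.mem_insert, Finset.mem_singleton]
    rcases gamma_classify hℓ hmem with ⟨y, hy, rfl⟩ | ⟨a, b, hb, hba, hab, rfl⟩ |
      ⟨a, ha, hal, rfl⟩ | rfl
    · rcases hadj with h | h
      · have := addBox_sh_out (by omega) h
        exact Or.inl (sh_eq' (by omega) (by omega))
      · have := addBox_sh_out (by omega) h
        exact Or.inr (Or.inl (sh_eq' (by omega) (by omega)))
    · rcases hadj with h | h
      · have := addBox_sh_out (by omega) h
        omega
      · have := addBox_sh_out (by omega) h
        exact Or.inr (Or.inr (sh_eq' (by omega) (by omega)))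
    · rcases hadj with h | h
      · have := addBox_sh_out (by omega) h
        omega
      · have := addBox_sh_out (by omega) h
        omega
    · rcases hadj with h | h
      · have := addBox_sh_out (by omega) h
        omega
      · have := addBox_sh_out (by omega) h
        omega
  rw [Finset.sum_insert (by
      simp only [Finset.mem_insert, Finset.mem_singleton]
      push_neg
      exact ⟨fun h => by have := sh_eq_out (by omega) h; omega,
             fun h => by have := sh_eq_out (by omega) h; omega⟩),
    Finset.sum_insert (by
      simp only [Finset.mem_singleton]
      exact fun h => by have := sh_eq_out (by omega) h; omega),
    Finset.sum_singleton]
  have t1 : (if AdjBox (sh (x-1) 0 0 0) (sh x 0 0 0) ∧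
      sh (x-1) 0 0 0 ∈ (fun _ : ℕ => GammaSet ℓ) m then PC AdjBox (fun _ => GammaSet ℓ) m (sh (x-1) 0 0 0) else 0)
      = Nat.choose (dd ℓ m (x - 1) + 1) 2 := by
    rw [if_pos ⟨Or.inl (addBox_sh' (by omega)), (gamma_row hℓ _).2 (by omega)⟩]
    exact ihR (x - 1)
  have t2 : (if AdjBox (sh (x+1) 0 0 0) (sh x 0 0 0) ∧
      sh (x+1) 0 0 0 ∈ (fun _ : ℕ => GammaSet ℓ) m then PC AdjBox (fun _ => GammaSet ℓ) m (sh (x+1) 0 0 0) else 0)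
      = Nat.choose (dd ℓ m (x + 1) + 1) 2 := by
    by_cases hxx : x + 1 ≤ ℓ - 2
    · rw [if_pos ⟨Or.inr (addBox_sh' (by omega)), (gamma_row hℓ _).2 hxx⟩]
      exact ihR (x + 1)
    · rw [if_neg (fun hc => hxx ((gamma_row hℓ _).1 hc.2)), dd_wall (by omega)]
      rfl
  have t3 : (if AdjBox (sh x 1 0 0) (sh x 0 0 0) ∧
      sh x 1 0 0 ∈ (fun _ : ℕ => GammaSet ℓ) m then PC AdjBox (fun _ => GammaSet ℓ) m (sh x 1 0 0) else 0)
      = dd ℓ m (x - 1) * dd ℓ m (x + 1) := by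
    by_cases hxx : x + 1 ≤ ℓ - 2
    · rw [if_pos ⟨Or.inr (addBox_sh' (by omega)), (gamma_tworow (by omega) (by omega)).2 (by omega)⟩]
      exact ihT x 1 (by omega) (by omega)
    · rw [if_neg (fun hc => hxx (by simpa using (gamma_tworow (by omega) (by omega)).1 hc.2)),
        dd_wall (show ℓ - 2 < x + 1 by omega), Nat.mul_zero]
  rw [t1, t2, t3]
  obtain ⟨y, rfl⟩ : ∃ y, x = y + 1 := ⟨x - 1, by omega⟩
  rw [dd_succ_succ m hx]
  simp only [Nat.add_sub_cancel]
  rw [chooseG]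
  ring

end Steps

section Steps2
variable {ℓ : ℕ}

lemma osc_step_row0 (hℓ : 6 ≤ ℓ) (m : ℕ)
    (ihR : ∀ x, OC ℓ m (sh x 0 0 0) = Nat.choose (dd ℓ m x + 1) 2) :
    OC ℓ (m + 1) (sh 0 0 0 0) = Nat.choose (dd ℓ (m + 1) 0 + 1) 2 := by
  classical
  rw [OC, PC_step (R := AdjBox) (Q := fun _ => GammaSet ℓ) {sh 1 0 0 0} ((gamma_row hℓ 0).2 (by omega)) ?cover]
  case cover =>
    intro μ hadj hmem
    simp only [Finset.mem_singleton]
    rcases gamma_classify hℓ hmem with ⟨y, hy, rfl⟩ | ⟨a, b, hb, hba, hab, rfl⟩ |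
      ⟨a, ha, hal, rfl⟩ | rfl
    · rcases hadj with h | h
      · have := addBox_sh_out (by omega) h; omega
      · have := addBox_sh_out (by omega) h
        exact sh_eq' (by omega) (by omega)
    · rcases hadj with h | h <;> · have := addBox_sh_out (by omega) h; omega
    · rcases hadj with h | h <;> · have := addBox_sh_out (by omega) h; omega
    · rcases hadj with h | h <;> · have := addBox_sh_out (by omega) h; omega
  rw [Finset.sum_singleton,
    if_pos ⟨Or.inr (addBox_sh' (by omega)), (gamma_row hℓ _).2 (by omega)⟩,
    dd_succ_zero]
  exact ihR 1

lemma osc_step_tw_diag (hℓ : 6 ≤ ℓ) (m a : ℕ) (ha : 2 ≤ a) (hab : a + a ≤ ℓ - 2)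
    (ihT : ∀ a b, 1 ≤ b → b ≤ a → OC ℓ m (sh a b 0 0) = dd ℓ m (a - b) * dd ℓ m (a + b)) :
    OC ℓ (m + 1) (sh a a 0 0) = dd ℓ (m + 1) 0 * dd ℓ (m + 1) (a + a) := by
  classical
  rw [OC, PC_step (R := AdjBox) (Q := fun _ => GammaSet ℓ) {sh (a+1) a 0 0, sh a (a-1) 0 0}
    ((gamma_tworow (by omega) (by omega)).2 hab) ?cover]
  case cover =>
    intro μ hadj hmem
    simp only [Finset.mem_insert, Finset.mem_singleton]
    rcases gamma_classify hℓ hmem with ⟨y, hy, rfl⟩ | ⟨a', b', hb, hba, hab', rfl⟩ |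
      ⟨a', ha', hal, rfl⟩ | rfl
    · rcases hadj with h | h <;> · have := addBox_sh_out (by omega) h; omega
    · rcases hadj with h | h
      · have := addBox_sh_out (by omega) h
        exact Or.inr (sh_eq' (by omega) (by omega))
      · have := addBox_sh_out (by omega) h
        exact Or.inl (sh_eq' (by omega) (by omega))
    · rcases hadj with h | h <;> · have := addBox_sh_out (by omega) h; omega
    · rcases hadj with h | h <;> · have := addBox_sh_out (by omega) h; omega
  rw [Finset.sum_insert (by
      simp only [Finset.mem_singleton]
      exact fun h => by have := sh_eq_out (by omega) h; omega),
    Finset.sum_singleton]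
  have t1 : (if AdjBox (sh (a+1) a 0 0) (sh a a 0 0) ∧
      sh (a+1) a 0 0 ∈ (fun _ : ℕ => GammaSet ℓ) m then
      PC AdjBox (fun _ => GammaSet ℓ) m (sh (a+1) a 0 0) else 0)
      = dd ℓ m 1 * dd ℓ m (a + a + 1) := by
    by_cases hxx : a + a + 1 ≤ ℓ - 2
    · rw [if_pos ⟨Or.inr (addBox_sh' (by omega)), (gamma_tworow (by omega) (by omega)).2 (by omega)⟩]
      have := ihT (a+1) a (by omega) (by omega)
      rw [show a + 1 - a = 1 by omega, show a + 1 + a = a + a + 1 by omega] at this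
      exact this
    · rw [if_neg (fun hc => hxx (by
        have := (gamma_tworow (show 1 ≤ a by omega) (show a ≤ a + 1 by omega)).1 hc.2
        omega)), dd_wall (show ℓ - 2 < a + a + 1 by omega), Nat.mul_zero]
  have t2 : (if AdjBox (sh a (a-1) 0 0) (sh a a 0 0) ∧
      sh a (a-1) 0 0 ∈ (fun _ : ℕ => GammaSet ℓ) m then
      PC AdjBox (fun _ => GammaSet ℓ) m (sh a (a-1) 0 0) else 0)
      = dd ℓ m 1 * dd ℓ m (a + a - 1) := by
    rw [if_pos ⟨Or.inl (addBox_sh' (by omega)), (gamma_tworow (by omega) (by omega)).2 (by omega)⟩]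
    have := ihT a (a-1) (by omega) (by omega)
    rw [show a - (a-1) = 1 by omega, show a + (a-1) = a + a - 1 by omega] at this
    exact this
  rw [t1, t2, dd_succ_zero]
  obtain ⟨y, hy⟩ : ∃ y, a + a = y + 1 := ⟨a + a - 1, by omega⟩
  rw [hy, dd_succ_succ m (by omega), show y + 2 = y + 1 + 1 by omega, ← hy,
    show a + a - 1 = y by omega]
  ring

lemma osc_step_tw_gen (hℓ : 6 ≤ ℓ) (m a b : ℕ) (hb : 2 ≤ b) (hba : b < a) (hab : a + b ≤ ℓ - 2)
    (ihT : ∀ a b, 1 ≤ b → b ≤ a → OC ℓ m (sh a b 0 0) = dd ℓ m (a - b) * dd ℓ m (a + b)) :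
    OC ℓ (m + 1) (sh a b 0 0) = dd ℓ (m + 1) (a - b) * dd ℓ (m + 1) (a + b) := by
  classical
  rw [OC, PC_step (R := AdjBox) (Q := fun _ => GammaSet ℓ) {sh (a+1) b 0 0, sh a (b+1) 0 0, sh (a-1) b 0 0, sh a (b-1) 0 0}
    ((gamma_tworow (by omega) (by omega)).2 hab) ?cover]
  case cover =>
    intro μ hadj hmem
    simp only [Finset.mem_insert, Finset.mem_singleton]
    rcases gamma_classify hℓ hmem with ⟨y, hy, rfl⟩ | ⟨a', b', hb', hba', hab', rfl⟩ |
      ⟨a', ha', hal, rfl⟩ | rfl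
    · rcases hadj with h | h <;> · have := addBox_sh_out (by omega) h; omega
    · rcases hadj with h | h
      · have := addBox_sh_out (by omega) h
        rcases Nat.lt_or_ge a' a with hc | hc
        · exact Or.inr (Or.inr (Or.inl (sh_eq' (by omega) (by omega))))
        · exact Or.inr (Or.inr (Or.inr (sh_eq' (by omega) (by omega))))
      · have := addBox_sh_out (by omega) h
        rcases Nat.lt_or_ge a a' with hc | hc
        · exact Or.inl (sh_eq' (by omega) (by omega))
        · exact Or.inr (Or.inl (sh_eq' (by omega) (by omega)))
    · rcases hadj with h | h <;> · have := addBox_sh_out (by omega) h; omega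
    · rcases hadj with h | h <;> · have := addBox_sh_out (by omega) h; omega
  rw [Finset.sum_insert (by
      simp only [Finset.mem_insert, Finset.mem_singleton]
      push_neg
      refine ⟨fun h => ?_, fun h => ?_, fun h => ?_⟩ <;>
        · have := sh_eq_out (by omega) h; omega),
    Finset.sum_insert (by
      simp only [Finset.mem_insert, Finset.mem_singleton]
      push_neg
      refine ⟨fun h => ?_, fun h => ?_⟩ <;> · have := sh_eq_out (by omega) h; omega),
    Finset.sum_insert (by
      simp only [Finset.mem_singleton]
      exact fun h => by have := sh_eq_out (by omega) h; omega),
    Finset.sum_singleton]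
  have t1 : (if AdjBox (sh (a+1) b 0 0) (sh a b 0 0) ∧
      sh (a+1) b 0 0 ∈ (fun _ : ℕ => GammaSet ℓ) m then
      PC AdjBox (fun _ => GammaSet ℓ) m (sh (a+1) b 0 0) else 0)
      = dd ℓ m (a - b + 1) * dd ℓ m (a + b + 1) := by
    by_cases hxx : a + b + 1 ≤ ℓ - 2
    · rw [if_pos ⟨Or.inr (addBox_sh' (by omega)), (gamma_tworow (by omega) (by omega)).2 (by omega)⟩]
      have := ihT (a+1) b (by omega) (by omega)
      rw [show a + 1 - b = a - b + 1 by omega, show a + 1 + b = a + b + 1 by omega] at this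
      exact this
    · rw [if_neg (fun hc => hxx (by
        have := (gamma_tworow (show 1 ≤ b by omega) (show b ≤ a + 1 by omega)).1 hc.2
        omega)), dd_wall (show ℓ - 2 < a + b + 1 by omega), Nat.mul_zero]
  have t2 : (if AdjBox (sh a (b+1) 0 0) (sh a b 0 0) ∧
      sh a (b+1) 0 0 ∈ (fun _ : ℕ => GammaSet ℓ) m then
      PC AdjBox (fun _ => GammaSet ℓ) m (sh a (b+1) 0 0) else 0)
      = dd ℓ m (a - b - 1) * dd ℓ m (a + b + 1) := by
    by_cases hxx : a + b + 1 ≤ ℓ - 2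
    · rw [if_pos ⟨Or.inr (addBox_sh' (by omega)), (gamma_tworow (by omega) (by omega)).2 (by omega)⟩]
      have := ihT a (b+1) (by omega) (by omega)
      rw [show a - (b+1) = a - b - 1 by omega, show a + (b+1) = a + b + 1 by omega] at this
      exact this
    · rw [if_neg (fun hc => hxx (by
        have := (gamma_tworow (show 1 ≤ b + 1 by omega) (show b + 1 ≤ a by omega)).1 hc.2
        omega)), dd_wall (show ℓ - 2 < a + b + 1 by omega), Nat.mul_zero]
  have t3 : (if AdjBox (sh (a-1) b 0 0) (sh a b 0 0) ∧
      sh (a-1) b 0 0 ∈ (fun _ : ℕ => GammaSet ℓ) m then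
      PC AdjBox (fun _ => GammaSet ℓ) m (sh (a-1) b 0 0) else 0)
      = dd ℓ m (a - b - 1) * dd ℓ m (a + b - 1) := by
    rw [if_pos ⟨Or.inl (addBox_sh' (by omega)), (gamma_tworow (by omega) (by omega)).2 (by omega)⟩]
    have := ihT (a-1) b (by omega) (by omega)
    rw [show a - 1 - b = a - b - 1 by omega, show a - 1 + b = a + b - 1 by omega] at this
    exact this
  have t4 : (if AdjBox (sh a (b-1) 0 0) (sh a b 0 0) ∧
      sh a (b-1) 0 0 ∈ (fun _ : ℕ => GammaSet ℓ) m then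
      PC AdjBox (fun _ => GammaSet ℓ) m (sh a (b-1) 0 0) else 0)
      = dd ℓ m (a - b + 1) * dd ℓ m (a + b - 1) := by
    rw [if_pos ⟨Or.inl (addBox_sh' (by omega)), (gamma_tworow (by omega) (by omega)).2 (by omega)⟩]
    have := ihT a (b-1) (by omega) (by omega)
    rw [show a - (b-1) = a - b + 1 by omega, show a + (b-1) = a + b - 1 by omega] at this
    exact this
  rw [t1, t2, t3, t4]
  obtain ⟨u, hu⟩ : ∃ u, a - b = u + 1 := ⟨a - b - 1, by omega⟩
  obtain ⟨v, hv⟩ : ∃ v, a + b = v + 1 := ⟨a + b - 1, by omega⟩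
  rw [hu, hv, dd_succ_succ m (by omega), dd_succ_succ m (by omega),
    show u + 2 = u + 1 + 1 by omega, show v + 2 = v + 1 + 1 by omega, ← hu, ← hv,
    show a - b - 1 = u by omega, show a + b - 1 = v by omega]
  ring

end Steps2

section Steps3
variable {ℓ : ℕ}

lemma osc_step_tw11 (hℓ : 6 ≤ ℓ) (m : ℕ)
    (ihR : ∀ x, OC ℓ m (sh x 0 0 0) = Nat.choose (dd ℓ m x + 1) 2)
    (ihT : ∀ a b, 1 ≤ b → b ≤ a → OC ℓ m (sh a b 0 0) = dd ℓ m (a - b) * dd ℓ m (a + b))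
    (ihH : ∀ a, 1 ≤ a → OC ℓ m (sh a 1 1 0) = Nat.choose (dd ℓ m a) 2) :
    OC ℓ (m + 1) (sh 1 1 0 0) = dd ℓ (m + 1) 0 * dd ℓ (m + 1) 2 := by
  classical
  rw [OC, PC_step (R := AdjBox) (Q := fun _ => GammaSet ℓ)
    {sh 2 1 0 0, sh 1 0 0 0, sh 1 1 1 0}
    ((gamma_tworow (by omega) (by omega)).2 (by omega)) ?cover]
  case cover =>
    intro μ hadj hmem
    simp only [Finset.mem_insert, Finset.mem_singleton]
    rcases gamma_classify hℓ hmem with ⟨y, hy, rfl⟩ | ⟨a', b', hb', hba', hab', rfl⟩ |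
      ⟨a', ha', hal, rfl⟩ | rfl
    · rcases hadj with h | h
      · have := addBox_sh_out (by omega) h
        exact Or.inr (Or.inl (sh_eq' (by omega) (by omega)))
      · have := addBox_sh_out (by omega) h; omega
    · rcases hadj with h | h
      · have := addBox_sh_out (by omega) h; omega
      · have := addBox_sh_out (by omega) h
        exact Or.inl (sh_eq' (by omega) (by omega))
    · rcases hadj with h | h
      · have := addBox_sh_out (by omega) h; omega
      · have := addBox_sh_out (by omega) h
        exact Or.inr (Or.inr (sh_eq' (by omega) (by omega)))
    · rcases hadj with h | h <;> · have := addBox_sh_out (by omega) h; omega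
  rw [Finset.sum_insert (by
      simp only [Finset.mem_insert, Finset.mem_singleton]
      push_neg
      refine ⟨fun h => ?_, fun h => ?_⟩ <;> · have := sh_eq_out (by omega) h; omega),
    Finset.sum_insert (by
      simp only [Finset.mem_singleton]
      exact fun h => by have := sh_eq_out (by omega) h; omega),
    Finset.sum_singleton,
    if_pos ⟨Or.inr (addBox_sh' (by omega)), (gamma_tworow (by omega) (by omega)).2 (by omega)⟩,
    if_pos ⟨Or.inl (addBox_sh' (by omega)), (gamma_row hℓ _).2 (by omega)⟩,
    if_pos ⟨Or.inr (addBox_sh' (by omega)), (gamma_hook hℓ (by omega)).2 (by omega)⟩]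
  have h1 := ihT 2 1 (by omega) (by omega)
  rw [show (2:ℕ) - 1 = 1 by omega, show (2:ℕ) + 1 = 3 by omega] at h1
  show OC ℓ m (sh 2 1 0 0) + (OC ℓ m (sh 1 0 0 0) + OC ℓ m (sh 1 1 1 0)) = _
  rw [h1, ihR 1, ihH 1 (by omega), dd_succ_zero,
    show (2:ℕ) = 1 + 1 by omega, dd_succ_succ m (by omega), show (1:ℕ)+2 = 3 by omega]
  nlinarith [chooseSq (dd ℓ m 1)]

lemma osc_step_tw1 (hℓ : 6 ≤ ℓ) (m a : ℕ) (ha : 2 ≤ a) (hab : a + 1 ≤ ℓ - 2)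
    (ihR : ∀ x, OC ℓ m (sh x 0 0 0) = Nat.choose (dd ℓ m x + 1) 2)
    (ihT : ∀ a b, 1 ≤ b → b ≤ a → OC ℓ m (sh a b 0 0) = dd ℓ m (a - b) * dd ℓ m (a + b))
    (ihH : ∀ a, 1 ≤ a → OC ℓ m (sh a 1 1 0) = Nat.choose (dd ℓ m a) 2) :
    OC ℓ (m + 1) (sh a 1 0 0) = dd ℓ (m + 1) (a - 1) * dd ℓ (m + 1) (a + 1) := by
  classical
  rw [OC, PC_step (R := AdjBox) (Q := fun _ => GammaSet ℓ)
    {sh (a+1) 1 0 0, sh a 2 0 0, sh (a-1) 1 0 0, sh a 0 0 0, sh a 1 1 0}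
    ((gamma_tworow (by omega) (by omega)).2 hab) ?cover]
  case cover =>
    intro μ hadj hmem
    simp only [Finset.mem_insert, Finset.mem_singleton]
    rcases gamma_classify hℓ hmem with ⟨y, hy, rfl⟩ | ⟨a', b', hb', hba', hab', rfl⟩ |
      ⟨a', ha', hal, rfl⟩ | rfl
    · rcases hadj with h | h
      · have := addBox_sh_out (by omega) h
        exact Or.inr (Or.inr (Or.inr (Or.inl (sh_eq' (by omega) (by omega)))))
      · have := addBox_sh_out (by omega) h; omega
    · rcases hadj with h | h
      · have := addBox_sh_out (by omega) h
        exact Or.inr (Or.inr (Or.inl (sh_eq' (by omega) (by omega))))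
      · have := addBox_sh_out (by omega) h
        rcases Nat.lt_or_ge a a' with hc | hc
        · exact Or.inl (sh_eq' (by omega) (by omega))
        · exact Or.inr (Or.inl (sh_eq' (by omega) (by omega)))
    · rcases hadj with h | h
      · have := addBox_sh_out (by omega) h; omega
      · have := addBox_sh_out (by omega) h
        exact Or.inr (Or.inr (Or.inr (Or.inr (sh_eq' (by omega) (by omega)))))
    · rcases hadj with h | h <;> · have := addBox_sh_out (by omega) h; omega
  rw [Finset.sum_insert (by
      simp only [Finset.mem_insert, Finset.mem_singleton]
      push_neg
      refine ⟨fun h => ?_, fun h => ?_, fun h => ?_, fun h => ?_⟩ <;>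
        · have := sh_eq_out (by omega) h; omega),
    Finset.sum_insert (by
      simp only [Finset.mem_insert, Finset.mem_singleton]
      push_neg
      refine ⟨fun h => ?_, fun h => ?_, fun h => ?_⟩ <;>
        · have := sh_eq_out (by omega) h; omega),
    Finset.sum_insert (by
      simp only [Finset.mem_insert, Finset.mem_singleton]
      push_neg
      refine ⟨fun h => ?_, fun h => ?_⟩ <;> · have := sh_eq_out (by omega) h; omega),
    Finset.sum_insert (by
      simp only [Finset.mem_singleton]
      exact fun h => by have := sh_eq_out (by omega) h; omega),
    Finset.sum_singleton]
  have t1 : (if AdjBox (sh (a+1) 1 0 0) (sh a 1 0 0) ∧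
      sh (a+1) 1 0 0 ∈ (fun _ : ℕ => GammaSet ℓ) m then
      PC AdjBox (fun _ => GammaSet ℓ) m (sh (a+1) 1 0 0) else 0)
      = dd ℓ m a * dd ℓ m (a + 2) := by
    by_cases hxx : a + 2 ≤ ℓ - 2
    · rw [if_pos ⟨Or.inr (addBox_sh' (by omega)), (gamma_tworow (by omega) (by omega)).2 (by omega)⟩]
      have := ihT (a+1) 1 (by omega) (by omega)
      rw [show a + 1 - 1 = a by omega, show a + 1 + 1 = a + 2 by omega] at this
      exact this
    · rw [if_neg (fun hc => hxx (by
        have := (gamma_tworow (show 1 ≤ 1 by omega) (show 1 ≤ a + 1 by omega)).1 hc.2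
        omega)), dd_wall (show ℓ - 2 < a + 2 by omega), Nat.mul_zero]
  have t2 : (if AdjBox (sh a 2 0 0) (sh a 1 0 0) ∧
      sh a 2 0 0 ∈ (fun _ : ℕ => GammaSet ℓ) m then
      PC AdjBox (fun _ => GammaSet ℓ) m (sh a 2 0 0) else 0)
      = dd ℓ m (a - 2) * dd ℓ m (a + 2) := by
    by_cases hxx : a + 2 ≤ ℓ - 2
    · rw [if_pos ⟨Or.inr (addBox_sh' (by omega)), (gamma_tworow (by omega) (by omega)).2 (by omega)⟩]
      exact ihT a 2 (by omega) (by omega)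
    · rw [if_neg (fun hc => hxx (by
        have := (gamma_tworow (show 1 ≤ 2 by omega) (show 2 ≤ a by omega)).1 hc.2
        omega)), dd_wall (show ℓ - 2 < a + 2 by omega), Nat.mul_zero]
  have t3 : (if AdjBox (sh (a-1) 1 0 0) (sh a 1 0 0) ∧
      sh (a-1) 1 0 0 ∈ (fun _ : ℕ => GammaSet ℓ) m then
      PC AdjBox (fun _ => GammaSet ℓ) m (sh (a-1) 1 0 0) else 0)
      = dd ℓ m (a - 2) * dd ℓ m a := by
    rw [if_pos ⟨Or.inl (addBox_sh' (by omega)), (gamma_tworow (by omega) (by omega)).2 (by omega)⟩]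
    have := ihT (a-1) 1 (by omega) (by omega)
    rw [show a - 1 - 1 = a - 2 by omega, show a - 1 + 1 = a by omega] at this
    exact this
  have t4 : (if AdjBox (sh a 0 0 0) (sh a 1 0 0) ∧
      sh a 0 0 0 ∈ (fun _ : ℕ => GammaSet ℓ) m then
      PC AdjBox (fun _ => GammaSet ℓ) m (sh a 0 0 0) else 0)
      = Nat.choose (dd ℓ m a + 1) 2 := by
    rw [if_pos ⟨Or.inl (addBox_sh' (by omega)), (gamma_row hℓ _).2 (by omega)⟩]
    exact ihR a
  have t5 : (if AdjBox (sh a 1 1 0) (sh a 1 0 0) ∧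
      sh a 1 1 0 ∈ (fun _ : ℕ => GammaSet ℓ) m then
      PC AdjBox (fun _ => GammaSet ℓ) m (sh a 1 1 0) else 0)
      = Nat.choose (dd ℓ m a) 2 := by
    rw [if_pos ⟨Or.inr (addBox_sh' (by omega)), (gamma_hook hℓ (by omega)).2 (by omega)⟩]
    exact ihH a (by omega)
  rw [t1, t2, t3, t4, t5]
  obtain ⟨c, rfl⟩ : ∃ c, a = c + 2 := ⟨a - 2, by omega⟩
  rw [show c + 2 - 1 = c + 1 by omega, show c + 2 + 1 = c + 2 + 1 by rfl,
    dd_succ_succ m (by omega), dd_succ_succ m (by omega),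
    show c + 2 - 2 = c by omega, show c + 1 + 1 = c + 2 by omega,
    show c + 2 + 1 + 1 = c + 4 by omega, show c + 2 + 2 = c + 4 by omega]
  nlinarith [chooseSq (dd ℓ m (c + 2))]

end Steps3

section Steps4
variable {ℓ : ℕ}

lemma osc_step_hook1 (hℓ : 6 ≤ ℓ) (m : ℕ)
    (ihT : ∀ a b, 1 ≤ b → b ≤ a → OC ℓ m (sh a b 0 0) = dd ℓ m (a - b) * dd ℓ m (a + b))
    (ihH : ∀ a, 1 ≤ a → OC ℓ m (sh a 1 1 0) = Nat.choose (dd ℓ m a) 2)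
    (ihC : OC ℓ m (sh 1 1 1 1) = Nat.choose (dd ℓ m 0) 2) :
    OC ℓ (m + 1) (sh 1 1 1 0) = Nat.choose (dd ℓ (m + 1) 1) 2 := by
  classical
  rw [OC, PC_step (R := AdjBox) (Q := fun _ => GammaSet ℓ)
    {sh 2 1 1 0, sh 1 1 0 0, sh 1 1 1 1}
    ((gamma_hook hℓ (by omega)).2 (by omega)) ?cover]
  case cover =>
    intro μ hadj hmem
    simp only [Finset.mem_insert, Finset.mem_singleton]
    rcases gamma_classify hℓ hmem with ⟨y, hy, rfl⟩ | ⟨a', b', hb', hba', hab', rfl⟩ |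
      ⟨a', ha', hal, rfl⟩ | rfl
    · rcases hadj with h | h <;> · have := addBox_sh_out (by omega) h; omega
    · rcases hadj with h | h
      · have := addBox_sh_out (by omega) h
        exact Or.inr (Or.inl (sh_eq' (by omega) (by omega)))
      · have := addBox_sh_out (by omega) h; omega
    · rcases hadj with h | h
      · have := addBox_sh_out (by omega) h; omega
      · have := addBox_sh_out (by omega) h
        exact Or.inl (sh_eq' (by omega) (by omega))
    · rcases hadj with h | h
      · have := addBox_sh_out (by omega) h; omega
      · have := addBox_sh_out (by omega) h
        exact Or.inr (Or.inr rfl)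
  rw [Finset.sum_insert (by
      simp only [Finset.mem_insert, Finset.mem_singleton]
      push_neg
      refine ⟨fun h => ?_, fun h => ?_⟩ <;> · have := sh_eq_out (by omega) h; omega),
    Finset.sum_insert (by
      simp only [Finset.mem_singleton]
      exact fun h => by have := sh_eq_out (by omega) h; omega),
    Finset.sum_singleton,
    if_pos ⟨Or.inr (addBox_sh' (by omega)), (gamma_hook hℓ (by omega)).2 (by omega)⟩,
    if_pos ⟨Or.inl (addBox_sh' (by omega)), (gamma_tworow (by omega) (by omega)).2 (by omega)⟩,
    if_pos ⟨Or.inr (addBox_sh' (by omega)), gamma_col4 hℓ⟩]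
  show OC ℓ m (sh 2 1 1 0) + (OC ℓ m (sh 1 1 0 0) + OC ℓ m (sh 1 1 1 1)) = _
  have h1 := ihT 1 1 (by omega) (by omega)
  rw [show (1:ℕ) - 1 = 0 by omega, show (1:ℕ) + 1 = 2 by omega] at h1
  rw [h1, ihH 2 (by omega), ihC, show (1:ℕ) = 0 + 1 by omega, dd_succ_succ m (by omega),
    show (0:ℕ) + 2 = 2 by omega, chooseA]
  ring

lemma osc_step_hook (hℓ : 6 ≤ ℓ) (m a : ℕ) (ha : 2 ≤ a) (hal : a ≤ ℓ - 2)
    (ihT : ∀ a b, 1 ≤ b → b ≤ a → OC ℓ m (sh a b 0 0) = dd ℓ m (a - b) * dd ℓ m (a + b))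
    (ihH : ∀ a, 1 ≤ a → OC ℓ m (sh a 1 1 0) = Nat.choose (dd ℓ m a) 2) :
    OC ℓ (m + 1) (sh a 1 1 0) = Nat.choose (dd ℓ (m + 1) a) 2 := by
  classical
  rw [OC, PC_step (R := AdjBox) (Q := fun _ => GammaSet ℓ)
    {sh (a+1) 1 1 0, sh (a-1) 1 1 0, sh a 1 0 0}
    ((gamma_hook hℓ (by omega)).2 hal) ?cover]
  case cover =>
    intro μ hadj hmem
    simp only [Finset.mem_insert, Finset.mem_singleton]
    rcases gamma_classify hℓ hmem with ⟨y, hy, rfl⟩ | ⟨a', b', hb', hba', hab', rfl⟩ |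
      ⟨a', ha', hal', rfl⟩ | rfl
    · rcases hadj with h | h <;> · have := addBox_sh_out (by omega) h; omega
    · rcases hadj with h | h
      · have := addBox_sh_out (by omega) h
        exact Or.inr (Or.inr (sh_eq' (by omega) (by omega)))
      · have := addBox_sh_out (by omega) h; omega
    · rcases hadj with h | h
      · have := addBox_sh_out (by omega) h
        exact Or.inr (Or.inl (sh_eq' (by omega) (by omega)))
      · have := addBox_sh_out (by omega) h
        exact Or.inl (sh_eq' (by omega) (by omega))
    · rcases hadj with h | h <;> · have := addBox_sh_out (by omega) h; omega
  rw [Finset.sum_insert (by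
      simp only [Finset.mem_insert, Finset.mem_singleton]
      push_neg
      refine ⟨fun h => ?_, fun h => ?_⟩ <;> · have := sh_eq_out (by omega) h; omega),
    Finset.sum_insert (by
      simp only [Finset.mem_singleton]
      exact fun h => by have := sh_eq_out (by omega) h; omega),
    Finset.sum_singleton]
  have t1 : (if AdjBox (sh (a+1) 1 1 0) (sh a 1 1 0) ∧
      sh (a+1) 1 1 0 ∈ (fun _ : ℕ => GammaSet ℓ) m then
      PC AdjBox (fun _ => GammaSet ℓ) m (sh (a+1) 1 1 0) else 0)
      = Nat.choose (dd ℓ m (a + 1)) 2 := by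
    by_cases hxx : a + 1 ≤ ℓ - 2
    · rw [if_pos ⟨Or.inr (addBox_sh' (by omega)), (gamma_hook hℓ (by omega)).2 hxx⟩]
      exact ihH (a+1) (by omega)
    · rw [if_neg (fun hc => hxx ((gamma_hook hℓ (by omega)).1 hc.2)),
        dd_wall (show ℓ - 2 < a + 1 by omega)]
      rfl
  have t2 : (if AdjBox (sh (a-1) 1 1 0) (sh a 1 1 0) ∧
      sh (a-1) 1 1 0 ∈ (fun _ : ℕ => GammaSet ℓ) m then
      PC AdjBox (fun _ => GammaSet ℓ) m (sh (a-1) 1 1 0) else 0)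
      = Nat.choose (dd ℓ m (a - 1)) 2 := by
    rw [if_pos ⟨Or.inl (addBox_sh' (by omega)), (gamma_hook hℓ (by omega)).2 (by omega)⟩]
    exact ihH (a-1) (by omega)
  have t3 : (if AdjBox (sh a 1 0 0) (sh a 1 1 0) ∧
      sh a 1 0 0 ∈ (fun _ : ℕ => GammaSet ℓ) m then
      PC AdjBox (fun _ => GammaSet ℓ) m (sh a 1 0 0) else 0)
      = dd ℓ m (a - 1) * dd ℓ m (a + 1) := by
    by_cases hxx : a + 1 ≤ ℓ - 2
    · rw [if_pos ⟨Or.inl (addBox_sh' (by omega)), (gamma_tworow (by omega) (by omega)).2 (by omega)⟩]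
      exact ihT a 1 (by omega) (by omega)
    · rw [if_neg (fun hc => hxx (by
        have := (gamma_tworow (show 1 ≤ 1 by omega) (show 1 ≤ a by omega)).1 hc.2
        omega)), dd_wall (show ℓ - 2 < a + 1 by omega), Nat.mul_zero]
  rw [t1, t2, t3]
  obtain ⟨c, rfl⟩ : ∃ c, a = c + 1 := ⟨a - 1, by omega⟩
  rw [dd_succ_succ m (by omega), show c + 1 - 1 = c by omega,
    show c + 1 + 1 = c + 2 by omega, chooseA]
  ring

lemma osc_step_col4 (hℓ : 6 ≤ ℓ) (m : ℕ)
    (ihH : ∀ a, 1 ≤ a → OC ℓ m (sh a 1 1 0) = Nat.choose (dd ℓ m a) 2) :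
    OC ℓ (m + 1) (sh 1 1 1 1) = Nat.choose (dd ℓ (m + 1) 0) 2 := by
  classical
  rw [OC, PC_step (R := AdjBox) (Q := fun _ => GammaSet ℓ) {sh 1 1 1 0}
    (gamma_col4 hℓ) ?cover]
  case cover =>
    intro μ hadj hmem
    simp only [Finset.mem_singleton]
    rcases gamma_classify hℓ hmem with ⟨y, hy, rfl⟩ | ⟨a', b', hb', hba', hab', rfl⟩ |
      ⟨a', ha', hal', rfl⟩ | rfl
    · rcases hadj with h | h <;> · have := addBox_sh_out (by omega) h; omega
    · rcases hadj with h | h <;> · have := addBox_sh_out (by omega) h; omega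
    · rcases hadj with h | h
      · have := addBox_sh_out (by omega) h
        exact sh_eq' (by omega) (by omega)
      · have := addBox_sh_out (by omega) h; omega
    · rcases hadj with h | h <;> · have := addBox_sh_out (by omega) h; omega
  rw [Finset.sum_singleton,
    if_pos ⟨Or.inl (addBox_sh' (by omega)), (gamma_hook hℓ (by omega)).2 (by omega)⟩,
    dd_succ_zero]
  exact ihH 1 (by omega)

end Steps4

lemma osc_main {ℓ : ℕ} (hℓ : 6 ≤ ℓ) (m : ℕ) :
    (∀ x, OC ℓ m (sh x 0 0 0) = Nat.choose (dd ℓ m x + 1) 2) ∧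
    (∀ a b, 1 ≤ b → b ≤ a → OC ℓ m (sh a b 0 0) = dd ℓ m (a - b) * dd ℓ m (a + b)) ∧
    (∀ a, 1 ≤ a → OC ℓ m (sh a 1 1 0) = Nat.choose (dd ℓ m a) 2) ∧
    (OC ℓ m (sh 1 1 1 1) = Nat.choose (dd ℓ m 0) 2) := by
  induction m with
  | zero => exact osc_base hℓ
  | succ m ih =>
    obtain ⟨ihR, ihT, ihH, ihC⟩ := ih
    refine ⟨?_, ?_, ?_, osc_step_col4 hℓ m ihH⟩
    · intro x
      rcases le_or_gt x (ℓ - 2) with hx | hx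
      · rcases Nat.eq_zero_or_pos x with rfl | hx1
        · exact osc_step_row0 hℓ m ihR
        · exact osc_step_row hℓ m x hx1 hx ihR ihT
      · rw [OC, PC_notmem (fun hc => by have := (gamma_row hℓ x).1 hc; omega),
          dd_wall (show ℓ - 2 < x by omega)]
        rfl
    · intro a b hb hba
      rcases le_or_gt (a + b) (ℓ - 2) with hab | hab
      · rcases Nat.lt_or_ge b a with hlt | hge
        · rcases Nat.lt_or_ge 1 b with h2 | h2
          · exact osc_step_tw_gen hℓ m a b h2 hlt hab ihT
          · have hb1 : b = 1 := by omega
            subst hb1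
            exact osc_step_tw1 hℓ m a (by omega) (by omega) ihR ihT ihH
        · have hba' : b = a := by omega
          subst hba'
          rw [show b - b = 0 by omega]
          rcases Nat.lt_or_ge 1 b with h2 | h2
          · exact osc_step_tw_diag hℓ m b (by omega) (by omega) ihT
          · have : b = 1 := by omega
            subst this
            rw [show (1:ℕ) + 1 = 2 by omega]
            exact osc_step_tw11 hℓ m ihR ihT ihH
      · rw [OC, PC_notmem (fun hc => by
          have := (gamma_tworow hb hba).1 hc
          omega), dd_wall (show ℓ - 2 < a + b by omega), Nat.mul_zero]
    · intro a ha
      rcases le_or_gt a (ℓ - 2) with hal | hal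
      · rcases Nat.lt_or_ge 1 a with h2 | h2
        · exact osc_step_hook hℓ m a h2 hal ihT ihH
        · have : a = 1 := by omega
          subst this
          exact osc_step_hook1 hℓ m ihT ihH ihC
      · rw [OC, PC_notmem (fun hc => by
          have := (gamma_hook hℓ ha).1 hc
          omega), dd_wall (show ℓ - 2 < a by omega)]
        rfl

section Tab
variable {ℓ : ℕ}

lemma rowLen_sh_zero (p q r s : ℕ) : (sh p q r s).rowLen 0 = p := by
  have := YoungDiagram.rowLen_ofRowLens
    (w := [p, min p q, min (min p q) r, min (min (min p q) r) s])
    (hw := sorted4 (min_le_left _ _) (min_le_left _ _) (min_le_left _ _)) ⟨0, by simp⟩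
  exact this

instance tabFinite (ℓ : ℕ) (m' : ℕ) (ν' : YoungDiagram) :
    Finite {f : Fin (m' + 1) → YoungDiagram // Path AddBox (fun j => LambdaSet j ℓ) m' ν' f} :=
  finite_path (fun μ₁ μ₂ h => by have := h.2; omega)

noncomputable def TC (ℓ m : ℕ) (ν : YoungDiagram) : ℕ :=
  PC AddBox (fun j => LambdaSet j ℓ) m ν

lemma mem_lambda {a b j : ℕ} (hba : b ≤ a) :
    sh a b 0 0 ∈ LambdaSet j ℓ ↔ a + b = j ∧ a - b ≤ ℓ - 2 := by
  obtain ⟨e0, e1, e2, e3, e4⟩ := rowLen_sh_eval (a := a) (b := b) (c := 0) (d := 0)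
    hba (by omega) (by omega)
  constructor
  · rintro ⟨hc, -, hd⟩
    rw [card_sh hba (by omega) (by omega)] at hc
    rw [e0, e1] at hd
    exact ⟨by omega, hd⟩
  · rintro ⟨hj, hd⟩
    refine ⟨?_, e2, ?_⟩
    · rw [card_sh hba (by omega) (by omega)]; omega
    · rw [e0, e1]; exact hd

lemma lambda_classify {j : ℕ} {μ : YoungDiagram} (hμ : μ ∈ LambdaSet j ℓ) :
    ∃ a b, b ≤ a ∧ a + b = j ∧ a - b ≤ ℓ - 2 ∧ μ = sh a b 0 0 := by
  obtain ⟨hc, h2, hd⟩ := hμ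
  have a1 := μ.rowLen_anti 0 1 (by omega)
  have a3 : μ.rowLen 3 = 0 := Nat.le_antisymm (h2 ▸ μ.rowLen_anti 2 3 (by omega)) (Nat.zero_le _)
  have a4 : μ.rowLen 4 = 0 := Nat.le_antisymm (h2 ▸ μ.rowLen_anti 2 4 (by omega)) (Nat.zero_le _)
  have heq := eq_sh_of a4
  rw [h2, a3] at heq
  refine ⟨μ.rowLen 0, μ.rowLen 1, a1, ?_, hd, heq⟩
  rw [heq] at hc
  rw [card_sh a1 (by omega) (by omega)] at hc
  omega

lemma bot_mem_lambda : (⊥ : YoungDiagram) ∈ LambdaSet 0 ℓ := by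
  refine ⟨?_, rowLen_bot 2, ?_⟩ <;> simp [YoungDiagram.card, rowLen_bot]

lemma tab_main (hℓ : 6 ≤ ℓ) : ∀ m a b, b ≤ a → a + b = m →
    TC ℓ m (sh a b 0 0) = dd ℓ m (a - b) := by
  classical
  intro m
  induction m with
  | zero =>
    intro a b hba hab
    have ha : a = 0 := by omega
    have hb : b = 0 := by omega
    subst ha; subst hb
    rw [TC, PC_zero (R := AddBox) (Q := fun j => LambdaSet j ℓ) bot_mem_lambda,
      if_pos sh_zero]
    rfl
  | succ m ih =>
    intro a b hba hab
    rcases le_or_gt (a - b) (ℓ - 2) with hd | hd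
    · rcases Nat.lt_or_ge b a with hlt | hge
      · -- b < a
        rw [TC, PC_step (R := AddBox) (Q := fun j => LambdaSet j ℓ)
          {sh (a-1) b 0 0, sh a (b-1) 0 0} ((mem_lambda hba).2 ⟨hab, hd⟩) ?cover]
        case cover =>
          intro μ hadd hmem
          simp only [Finset.mem_insert, Finset.mem_singleton]
          obtain ⟨a', b', hba', hab', hd', rfl⟩ := lambda_classify hmem
          have := addBox_sh_out (by omega) hadd
          rcases Nat.lt_or_ge a' a with hc | hc
          · exact Or.inl (sh_eq' (by omega) (by omega))
          · exact Or.inr (sh_eq' (by omega) (by omega))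
        rw [Finset.sum_insert (by
            simp only [Finset.mem_singleton]
            intro h
            have := congrArg (fun μ => YoungDiagram.rowLen μ 0) h
            simp only [rowLen_sh_zero] at this
            omega),
          Finset.sum_singleton]
        have t1 : (if AddBox (sh (a-1) b 0 0) (sh a b 0 0) ∧
            sh (a-1) b 0 0 ∈ LambdaSet m ℓ then
            PC AddBox (fun j => LambdaSet j ℓ) m (sh (a-1) b 0 0) else 0)
            = dd ℓ m (a - b - 1) := by
          rw [if_pos ⟨addBox_sh' (by omega), (mem_lambda (by omega)).2 ⟨by omega, by omega⟩⟩]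
          have := ih (a-1) b (by omega) (by omega)
          rw [show a - 1 - b = a - b - 1 by omega] at this
          exact this
        have t2 : (if AddBox (sh a (b-1) 0 0) (sh a b 0 0) ∧
            sh a (b-1) 0 0 ∈ LambdaSet m ℓ then
            PC AddBox (fun j => LambdaSet j ℓ) m (sh a (b-1) 0 0) else 0)
            = dd ℓ m (a - b + 1) := by
          rcases Nat.eq_zero_or_pos b with rfl | hb1
          · rw [if_neg (fun hc => by
              have := addBox_sh_out (by omega) hc.1
              omega)]
            rw [dd_big (show m < a - 0 + 1 by omega)]
          · by_cases hxx : a - b + 1 ≤ ℓ - 2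
            · rw [if_pos ⟨addBox_sh' (by omega), (mem_lambda (by omega)).2 ⟨by omega, by omega⟩⟩]
              have := ih a (b-1) (by omega) (by omega)
              rw [show a - (b-1) = a - b + 1 by omega] at this
              exact this
            · rw [if_neg (fun hc => by
                have := ((mem_lambda (show b - 1 ≤ a by omega)).1 hc.2).2
                omega)]
              rw [dd_wall (show ℓ - 2 < a - b + 1 by omega)]
        rw [t1, t2]
        obtain ⟨u, hu⟩ : ∃ u, a - b = u + 1 := ⟨a - b - 1, by omega⟩
        rw [hu, dd_succ_succ m (by omega), show u + 1 - 1 = u by omega,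
          show u + 1 + 1 = u + 2 by omega]
      · -- a = b
        have hab' : b = a := by omega
        subst hab'
        rw [TC, PC_step (R := AddBox) (Q := fun j => LambdaSet j ℓ)
          {sh b (b-1) 0 0} ((mem_lambda hba).2 ⟨hab, hd⟩) ?cover]
        case cover =>
          intro μ hadd hmem
          simp only [Finset.mem_singleton]
          obtain ⟨a', b', hba', hab', hd', rfl⟩ := lambda_classify hmem
          have := addBox_sh_out (by omega) hadd
          exact sh_eq' (by omega) (by omega)
        rw [Finset.sum_singleton,
          if_pos ⟨addBox_sh' (by omega), (mem_lambda (by omega)).2 ⟨by omega, by omega⟩⟩]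
        have h5 := ih b (b-1) (by omega) (by omega)
        rw [show b - (b-1) = 1 by omega] at h5
        rw [show b - b = 0 by omega, dd_succ_zero]
        exact h5
    · rw [TC, PC_notmem (fun hc => by
        have := ((mem_lambda hba).1 hc).2
        omega), dd_wall (show ℓ - 2 < a - b by omega)]

end Tab

lemma rowsEq_single {μ : YoungDiagram} {x : ℕ} : RowsEq μ [x] ↔ μ = sh x 0 0 0 := by
  constructor
  · intro h
    apply yd_ext
    intro i
    rw [rowLen_sh (by omega) (by omega) (by omega), h i]
    rcases i with _|_|_|_|i <;> simp [List.getD]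
  · rintro rfl i
    rw [rowLen_sh (by omega) (by omega) (by omega)]
    rcases i with _|_|_|_|i <;> simp [List.getD]

lemma rowsEq_pair {μ : YoungDiagram} {a b : ℕ} (hba : b ≤ a) :
    RowsEq μ [a, b] ↔ μ = sh a b 0 0 := by
  constructor
  · intro h
    apply yd_ext
    intro i
    rw [rowLen_sh hba (by omega) (by omega), h i]
    rcases i with _|_|_|_|i <;> simp [List.getD]
  · rintro rfl i
    rw [rowLen_sh hba (by omega) (by omega)]
    rcases i with _|_|_|_|i <;> simp [List.getD]

lemma oscCount_eq_OC (ℓ m x : ℕ) :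
    oscCount (GammaSet ℓ) m [x] = OC ℓ m (sh x 0 0 0) := by
  rw [oscCount, OC, PC]
  apply Nat.card_congr
  apply Equiv.subtypeEquivRight
  intro f
  constructor
  · rintro ⟨⟨h1, h2, h3⟩, h4⟩
    exact ⟨h1, h2, h3, rowsEq_single.1 h4⟩
  · rintro ⟨h1, h2, h3, h4⟩
    exact ⟨⟨h1, h2, h3⟩, rowsEq_single.2 h4⟩

lemma tabCount_eq_TC (ℓ m : ℕ) {a b : ℕ} (hba : b ≤ a) :
    tabCount (fun j => LambdaSet j ℓ) m [a, b] = TC ℓ m (sh a b 0 0) := by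
  rw [tabCount, TC, PC]
  apply Nat.card_congr
  apply Equiv.subtypeEquivRight
  intro f
  constructor
  · rintro ⟨⟨h1, h2, h3⟩, h4⟩
    exact ⟨h1, h2, h3, (rowsEq_pair hba).1 h4⟩
  · rintro ⟨h1, h2, h3, h4⟩
    exact ⟨⟨h1, h2, h3⟩, (rowsEq_pair hba).2 h4⟩

end OT

/-- Theorem 2.1, equation (3) (`symdim`), for finite `ℓ`:
for `λ = [λ₁,λ₂] ∈ Λ(m,ℓ)` and `ν₁ = 2λ₁ - m`,
`|𝒪_ℓ(m,[ν₁])| = C(|𝒯_ℓ(λ)| + 1, 2)`. -/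
theorem osc_count_eq_choose_succ (ℓ m : ℕ) (hℓ : 6 ≤ ℓ) (hm : 1 ≤ m)
    (l₁ l₂ : ℕ)
    (hl : l₂ ≤ l₁) (hlm : l₁ + l₂ = m) (hld : l₁ - l₂ ≤ ℓ - 2) :
    oscCount (GammaSet ℓ) m [2 * l₁ - m]
      = Nat.choose (tabCount (fun j => LambdaSet j ℓ) m [l₁, l₂] + 1) 2 := by
  rw [show 2 * l₁ - m = l₁ - l₂ by omega, OT.oscCount_eq_OC, OT.tabCount_eq_TC ℓ m hl,
    OT.tab_main hℓ m l₁ l₂ hl hlm, (OT.osc_main hℓ m).1]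
end

section
/- Let m ≥ 1 and let λ = [λ₁,λ₂] and μ = [μ₁,μ₂] be Young diagrams of size m with at most two rows and λ ≠ μ. Set ν₁ = λ₁ + μ₁ − m and ν₂ = |λ₁ − μ₁|. Then the number of oscillating tableaux of length m and shape [ν₁,ν₂] all of whose intermediate shapes lie in Γ(∞) equals |𝒯(λ)| · |𝒯(μ)|, the product of the numbers of standard Young tableaux of shapes λ and μ. -/
open YoungDiagram Finset
open scoped Classical

section PathCount

variable {X : Type} (R : X → X → Prop) (S : Set X) (x₀ : X)

def PathSp (m : ℕ) (x : X) : Type :=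
  {f : Fin (m + 1) → X //
    (f 0 = x₀ ∧ (∀ j : Fin m, R (f j.castSucc) (f j.succ)) ∧ ∀ j : Fin (m + 1), f j ∈ S)
     ∧ f (Fin.last m) = x}

noncomputable def pcount (m : ℕ) (x : X) : ℕ := Nat.card (PathSp R S x₀ m x)

lemma pcount_zero (x : X) :
    pcount R S x₀ 0 x = if x = x₀ ∧ x₀ ∈ S then 1 else 0 := by
  classical
  split_ifs with h
  · obtain ⟨rfl, hS⟩ := h
    have hu : Unique (PathSp R S x 0 x) := by
      refine ⟨⟨⟨fun _ => x, ⟨rfl, fun j => j.elim0, fun j => by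
        rw [Fin.eq_zero j]; exact hS⟩, rfl⟩⟩, ?_⟩
      rintro ⟨f, ⟨h0, _, _⟩, hl⟩
      apply Subtype.ext
      funext j
      rw [Fin.eq_zero j]
      exact h0
    rw [pcount, Nat.card_eq_one_iff_unique]
    exact ⟨hu.instSubsingleton, ⟨hu.default⟩⟩
  · rw [pcount, Nat.card_eq_zero]
    left
    constructor
    rintro ⟨f, ⟨h0, _, hmem⟩, hl⟩
    have hx : x = x₀ := by rw [← hl, Fin.eq_zero (Fin.last 0), h0]
    exact h ⟨hx, by rw [← h0]; exact hmem 0⟩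


variable {R S x₀}

/-- Underlying-function map out of the sigma type; it is injective. -/
def sigU {m : ℕ} {x : X} {N : Finset X} :
    (Σ y : N, {p : PathSp R S x₀ m (y : X) // R (y : X) x}) → (Fin (m + 1) → X) :=
  fun s => s.2.1.1

lemma sigU_injective {m : ℕ} {x : X} {N : Finset X} :
    Function.Injective (sigU (R := R) (S := S) (x₀ := x₀) (m := m) (x := x) (N := N)) := by
  rintro ⟨⟨y, hy⟩, ⟨⟨g, hg⟩, hR⟩⟩ ⟨⟨y', hy'⟩, ⟨⟨g', hg'⟩, hR'⟩⟩ h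
  simp only [sigU] at h
  subst h
  have hyy : y = y' := hg.2.symm.trans hg'.2
  subst hyy
  rfl

def pathSuccFun (m : ℕ) (x : X) (N : Finset X) (hN : ∀ y, y ∈ S → R y x → y ∈ N) :
    PathSp R S x₀ (m + 1) x → Σ y : N, {p : PathSp R S x₀ m (y : X) // R (y : X) x} := by
  rintro ⟨f, ⟨h0, hstep, hmem⟩, hlast⟩
  have hy : R (f ((Fin.last m).castSucc)) x := by
    have := hstep (Fin.last m)
    rwa [Fin.succ_last, hlast] at this
  refine ⟨⟨f ((Fin.last m).castSucc), hN _ (hmem _) hy⟩,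
    ⟨⟨Fin.init f, ⟨?_, ?_, ?_⟩, rfl⟩, hy⟩⟩
  · show f (Fin.castSucc 0) = x₀
    rwa [Fin.castSucc_zero]
  · intro j
    have := hstep j.castSucc
    show R (f j.castSucc.castSucc) (f j.succ.castSucc)
    rwa [Fin.succ_castSucc] at this
  · intro j; exact hmem _

lemma sigU_pathSuccFun {m : ℕ} {x : X} {N : Finset X} {hN : ∀ y, y ∈ S → R y x → y ∈ N}
    (f : PathSp R S x₀ (m + 1) x) : sigU (pathSuccFun m x N hN f) = Fin.init f.1 := by
  rcases f with ⟨f, ⟨h0, h1, h2⟩, h3⟩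
  rfl

lemma pathSuccFun_bijective (m : ℕ) (x : X) (hx : x ∈ S) (N : Finset X)
    (hN : ∀ y, y ∈ S → R y x → y ∈ N) :
    Function.Bijective (pathSuccFun (R := R) (S := S) (x₀ := x₀) m x N hN) := by
  constructor
  · intro f f' h
    have hu : Fin.init f.1 = Fin.init f'.1 := by
      rw [← sigU_pathSuccFun (hN := hN) f, ← sigU_pathSuccFun (hN := hN) f', h]
    apply Subtype.ext
    rw [← Fin.snoc_init_self f.1, ← Fin.snoc_init_self f'.1, hu, f.2.2, f'.2.2]
  · rintro ⟨⟨y, hy⟩, ⟨⟨g, ⟨hg0, hgstep, hgmem⟩, hglast⟩, hR⟩⟩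
    have hgmx : ∀ j : Fin (m + 2), (Fin.snoc g x : Fin (m + 2) → X) j ∈ S := by
      intro j
      induction j using Fin.lastCases with
      | last => rw [Fin.snoc_last]; exact hx
      | cast i => rw [Fin.snoc_castSucc]; exact hgmem i
    have hgsx : ∀ j : Fin (m + 1),
        R ((Fin.snoc g x : Fin (m + 2) → X) j.castSucc)
          ((Fin.snoc g x : Fin (m + 2) → X) j.succ) := by
      intro j
      induction j using Fin.lastCases with
      | last =>
        rw [Fin.succ_last, Fin.snoc_last, Fin.snoc_castSucc, hglast]
        exact hR
      | cast i =>
        rw [Fin.succ_castSucc, Fin.snoc_castSucc, Fin.snoc_castSucc]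
        exact hgstep i
    refine ⟨⟨Fin.snoc g x, ⟨?_, hgsx, hgmx⟩, Fin.snoc_last _ _⟩, ?_⟩
    · show (Fin.snoc g x : Fin (m + 2) → X) (Fin.castSucc 0) = x₀
      rw [Fin.snoc_castSucc]; exact hg0
    · apply sigU_injective
      refine (sigU_pathSuccFun (hN := hN) _).trans ?_
      show Fin.init (Fin.snoc g x : Fin (m + 2) → X) = g
      exact Fin.init_snoc _ _

lemma pathSp_finite (Hfin : ∀ x, {y | y ∈ S ∧ R y x}.Finite) :
    ∀ (m : ℕ) (x : X), Finite (PathSp R S x₀ m x) := by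
  intro m
  induction m with
  | zero =>
    intro x
    have : Subsingleton (PathSp R S x₀ 0 x) := by
      constructor
      rintro ⟨f, ⟨h0, _, _⟩, _⟩ ⟨f', ⟨h0', _, _⟩, _⟩
      apply Subtype.ext
      funext j
      show f j = f' j
      rw [Fin.eq_zero j, h0, h0']
    exact Finite.of_subsingleton
  | succ m ih =>
    intro x
    by_cases hx : x ∈ S
    · haveI : ∀ y : (Hfin x).toFinset, Finite (PathSp R S x₀ m (y : X)) := fun y => ih _
      have hN : ∀ y, y ∈ S → R y x → y ∈ (Hfin x).toFinset := by
        intro y h1 h2; rw [Set.Finite.mem_toFinset]; exact ⟨h1, h2⟩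
      exact Finite.of_equiv _ (Equiv.ofBijective _ (pathSuccFun_bijective m x hx _ hN)).symm
    · have : IsEmpty (PathSp R S x₀ (m+1) x) := by
        constructor
        rintro ⟨f, ⟨_, _, hmem⟩, hlast⟩
        exact hx (hlast ▸ hmem (Fin.last (m+1)))
      exact Finite.of_subsingleton

lemma pcount_succ (Hfin : ∀ x, {y | y ∈ S ∧ R y x}.Finite) (m : ℕ) (x : X)
    (N : Finset X) (hN : ∀ y, y ∈ S → R y x → y ∈ N) :
    pcount R S x₀ (m + 1) x
      = if x ∈ S then ∑ y ∈ N, (if R y x then pcount R S x₀ m y else 0) else 0 := by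
  split_ifs with hx
  · rw [pcount, Nat.card_congr (Equiv.ofBijective _ (pathSuccFun_bijective m x hx N hN))]
    haveI : ∀ y : N, Finite (PathSp R S x₀ m (y : X)) := fun y => pathSp_finite Hfin m _
    haveI F : ∀ y : N, Fintype {p : PathSp R S x₀ m (y : X) // R (y : X) x} :=
      fun y => Fintype.ofFinite _
    rw [Nat.card_eq_fintype_card, Fintype.card_sigma]
    rw [← Finset.sum_coe_sort N (fun y => if R y x then pcount R S x₀ m y else 0)]
    congr 1
    funext y
    split_ifs with hR
    · rw [pcount, ← Nat.card_eq_fintype_card]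
      exact Nat.card_congr (Equiv.subtypeUnivEquiv (fun _ => hR))
    · rw [Fintype.card_eq_zero_iff]
      exact ⟨fun p => hR p.2⟩
  · rw [pcount, Nat.card_eq_zero]
    left
    constructor
    rintro ⟨f, ⟨_, _, hmem⟩, hlast⟩
    exact hx (hlast ▸ hmem (Fin.last (m+1)))

end PathCount


section YD
open YoungDiagram

lemma rowLen_eq_of {μ : YoungDiagram} {i n : ℕ} (h : ∀ j, (i, j) ∈ μ ↔ j < n) :
    μ.rowLen i = n := by
  have h1 : ¬ (μ.rowLen i < n) := fun hlt =>
    lt_irrefl _ (mem_iff_lt_rowLen.mp ((h _).mpr hlt))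
  have h2 : ¬ (n < μ.rowLen i) := fun hlt =>
    lt_irrefl _ ((h _).mp (mem_iff_lt_rowLen.mpr hlt))
  omega

lemma colLen_eq_of {μ : YoungDiagram} {j n : ℕ} (h : ∀ i, (i, j) ∈ μ ↔ i < n) :
    μ.colLen j = n := by
  have h1 : ¬ (μ.colLen j < n) := fun hlt =>
    lt_irrefl _ (mem_iff_lt_colLen.mp ((h _).mpr hlt))
  have h2 : ¬ (n < μ.colLen j) := fun hlt =>
    lt_irrefl _ ((h _).mp (mem_iff_lt_colLen.mpr hlt))
  omega

lemma yd_le_iff {μ ν : YoungDiagram} : μ ≤ ν ↔ ∀ i, μ.rowLen i ≤ ν.rowLen i := by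
  constructor
  · intro h i
    rcases Nat.eq_zero_or_pos (μ.rowLen i) with h0 | h0
    · omega
    · have : (i, μ.rowLen i - 1) ∈ μ := mem_iff_lt_rowLen.mpr (by omega)
      have : (i, μ.rowLen i - 1) ∈ ν := h this
      have := mem_iff_lt_rowLen.mp this
      omega
  · intro h c hc
    obtain ⟨i, j⟩ := c
    have := mem_iff_lt_rowLen.mp hc
    exact mem_iff_lt_rowLen.mpr (lt_of_lt_of_le this (h i))

lemma yd_ext_rowLen {μ ν : YoungDiagram} (h : ∀ i, μ.rowLen i = ν.rowLen i) : μ = ν :=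
  le_antisymm (yd_le_iff.mpr fun i => (h i).le) (yd_le_iff.mpr fun i => (h i).ge)

lemma card_eq_sum_rowLens' {μ : YoungDiagram} {K : ℕ} (hK : μ.rowLen K = 0) :
    μ.card = ∑ i ∈ Finset.range K, μ.rowLen i := by
  have hcells : μ.cells = (Finset.range K).biUnion (fun i => μ.row i) := by
    ext c
    obtain ⟨i, j⟩ := c
    simp only [Finset.mem_biUnion, Finset.mem_range, mem_row_iff, YoungDiagram.mem_cells]
    constructor
    · intro hc
      refine ⟨i, ?_, ⟨hc, rfl⟩⟩
      by_contra hiK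
      have h1 : μ.rowLen i ≤ μ.rowLen K := μ.rowLen_anti K i (by omega)
      have := mem_iff_lt_rowLen.mp hc
      omega
    · rintro ⟨i', _, hmem, rfl⟩
      exact hmem
  rw [YoungDiagram.card, hcells, Finset.card_biUnion]
  · exact Finset.sum_congr rfl fun i _ => (μ.rowLen_eq_card (i := i)).symm
  · intro i _ i' _ hne
    rw [Function.onFun, Finset.disjoint_left]
    intro c hc hc'
    rw [mem_row_iff] at hc hc'
    exact hne (hc.2 ▸ hc'.2)

lemma mk4_sorted (a b c d : ℕ) :
    List.Pairwise (· ≥ ·) [a, min a b, min a (min b c), min a (min b (min c d))] := by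
  simp only [List.pairwise_cons, List.mem_cons, List.not_mem_nil, or_false, List.Pairwise.nil,
    and_true, List.mem_singleton]
  constructor
  · rintro x (rfl | rfl | rfl) <;> omega
  constructor
  · rintro x (rfl | rfl) <;> omega
  constructor
  · rintro x rfl; omega
  · rintro x h; exact absurd h (by simp)

/-- The Young diagram with (sorted) row lengths `a ≥ b ≥ c ≥ d`. -/
def mk4 (a b c d : ℕ) : YoungDiagram :=
  YoungDiagram.ofRowLens _ (mk4_sorted a b c d).sortedGE

lemma rowLen_mk4 {a b c d : ℕ} (hb : b ≤ a) (hc : c ≤ b) (hd : d ≤ c) (i : ℕ) :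
    (mk4 a b c d).rowLen i = [a, b, c, d].getD i 0 := by
  have e1 : min a b = b := by omega
  have e2 : min a (min b c) = c := by omega
  have e3 : min a (min b (min c d)) = d := by omega
  match i with
  | 0 => have := YoungDiagram.rowLen_ofRowLens (hw := (mk4_sorted a b c d).sortedGE) ⟨0, by norm_num⟩
         rw [mk4]; simpa using this
  | 1 => have := YoungDiagram.rowLen_ofRowLens (hw := (mk4_sorted a b c d).sortedGE) ⟨1, by norm_num⟩
         rw [mk4]; simpa [e1] using this
  | 2 => have := YoungDiagram.rowLen_ofRowLens (hw := (mk4_sorted a b c d).sortedGE) ⟨2, by norm_num⟩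
         rw [mk4]; simpa [e2] using this
  | 3 => have := YoungDiagram.rowLen_ofRowLens (hw := (mk4_sorted a b c d).sortedGE) ⟨3, by norm_num⟩
         rw [mk4]; simpa [e3] using this
  | (n+4) =>
    have : [a, b, c, d].getD (n+4) 0 = 0 := by simp [List.getD]
    rw [this]
    apply rowLen_eq_of
    intro j
    simp only [mk4, YoungDiagram.mem_ofRowLens]
    constructor
    · rintro ⟨h, _⟩; simp at h
    · omega

lemma mem_mk4 {a b c d : ℕ} (hb : b ≤ a) (hc : c ≤ b) (hd : d ≤ c) (i j : ℕ) :
    (i, j) ∈ mk4 a b c d ↔ j < [a, b, c, d].getD i 0 := by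
  rw [YoungDiagram.mem_iff_lt_rowLen, rowLen_mk4 hb hc hd]

lemma card_mk4 {a b c d : ℕ} (hb : b ≤ a) (hc : c ≤ b) (hd : d ≤ c) :
    (mk4 a b c d).card = a + b + c + d := by
  rw [card_eq_sum_rowLens' (K := 4) (by rw [rowLen_mk4 hb hc hd]; rfl)]
  rw [Finset.sum_range_succ, Finset.sum_range_succ, Finset.sum_range_succ,
    Finset.sum_range_one, rowLen_mk4 hb hc hd, rowLen_mk4 hb hc hd,
    rowLen_mk4 hb hc hd, rowLen_mk4 hb hc hd]
  simp [List.getD]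
  try omega

lemma mk4_eq_iff {a b c d a' b' c' d' : ℕ} (hb : b ≤ a) (hc : c ≤ b) (hd : d ≤ c)
    (hb' : b' ≤ a') (hc' : c' ≤ b') (hd' : d' ≤ c') :
    mk4 a b c d = mk4 a' b' c' d' ↔ (a = a' ∧ b = b' ∧ c = c' ∧ d = d') := by
  constructor
  · intro h
    have h0 := congrArg (fun μ => YoungDiagram.rowLen μ 0) h
    have h1 := congrArg (fun μ => YoungDiagram.rowLen μ 1) h
    have h2 := congrArg (fun μ => YoungDiagram.rowLen μ 2) h
    have h3 := congrArg (fun μ => YoungDiagram.rowLen μ 3) h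
    simp only [rowLen_mk4 hb hc hd, rowLen_mk4 hb' hc' hd'] at h0 h1 h2 h3
    exact ⟨h0, h1, h2, h3⟩
  · rintro ⟨rfl, rfl, rfl, rfl⟩; rfl

lemma addBox_mk4_iff {a b c d a' b' c' d' : ℕ} (hb : b ≤ a) (hc : c ≤ b) (hd : d ≤ c)
    (hb' : b' ≤ a') (hc' : c' ≤ b') (hd' : d' ≤ c') :
    AddBox (mk4 a b c d) (mk4 a' b' c' d') ↔
      (a ≤ a' ∧ b ≤ b' ∧ c ≤ c' ∧ d ≤ d' ∧ a' + b' + c' + d' = a + b + c + d + 1) := by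
  rw [AddBox, yd_le_iff, card_mk4 hb hc hd, card_mk4 hb' hc' hd']
  constructor
  · rintro ⟨hle, hcard⟩
    have h0 := hle 0
    have h1 := hle 1
    have h2 := hle 2
    have h3 := hle 3
    simp only [rowLen_mk4 hb hc hd, rowLen_mk4 hb' hc' hd'] at h0 h1 h2 h3
    simp only [List.getD] at h0 h1 h2 h3
    refine ⟨by simpa using h0, by simpa using h1, by simpa using h2, by simpa using h3, hcard⟩
  · rintro ⟨ha, hbb, hcc, hdd, hcard⟩
    refine ⟨?_, hcard⟩
    intro i
    rw [rowLen_mk4 hb hc hd, rowLen_mk4 hb' hc' hd']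
    match i with
    | 0 => simpa using ha
    | 1 => simpa using hbb
    | 2 => simpa using hcc
    | 3 => simpa using hdd
    | (n+4) => simp [List.getD]

end YD
section Gamma
open YoungDiagram

lemma colLen_le_iff' {μ : YoungDiagram} {j n : ℕ} : μ.colLen j ≤ n ↔ (n, j) ∉ μ := by
  rw [YoungDiagram.mem_iff_lt_colLen]; omega

lemma rowLen_bot (i : ℕ) : (⊥ : YoungDiagram).rowLen i = 0 :=
  rowLen_eq_of (by simp [YoungDiagram.notMem_bot])

lemma bot_eq_mk4 : (⊥ : YoungDiagram) = mk4 0 0 0 0 := by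
  apply yd_ext_rowLen
  intro i
  rw [rowLen_bot, rowLen_mk4 le_rfl le_rfl le_rfl]
  match i with
  | 0 => rfl
  | 1 => rfl
  | 2 => rfl
  | 3 => rfl
  | (n+4) => rfl

lemma bot_mem_gammaInf : (⊥ : YoungDiagram) ∈ GammaInf := by
  have h0 : (⊥ : YoungDiagram).colLen 0 ≤ 0 := colLen_le_iff'.mpr (by simp)
  have h1 : (⊥ : YoungDiagram).colLen 1 ≤ 0 := colLen_le_iff'.mpr (by simp)
  simp only [GammaInf, Set.mem_setOf_eq]
  omega

lemma row2_mem_gammaInf {a b : ℕ} (hb : b ≤ a) : mk4 a b 0 0 ∈ GammaInf := by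
  have h0 : (mk4 a b 0 0).colLen 0 ≤ 2 :=
    colLen_le_iff'.mpr (by rw [mem_mk4 hb b.zero_le le_rfl]; simp [List.getD])
  have h1 : (mk4 a b 0 0).colLen 1 ≤ 2 :=
    colLen_le_iff'.mpr (by rw [mem_mk4 hb b.zero_le le_rfl]; simp [List.getD])
  simp only [GammaInf, Set.mem_setOf_eq]
  omega

lemma hook_mem_gammaInf {a : ℕ} (ha : 1 ≤ a) : mk4 a 1 1 0 ∈ GammaInf := by
  have h0 : (mk4 a 1 1 0).colLen 0 ≤ 3 :=
    colLen_le_iff'.mpr (by rw [mem_mk4 ha le_rfl (Nat.zero_le 1)]; simp [List.getD])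
  have h1 : (mk4 a 1 1 0).colLen 1 ≤ 1 :=
    colLen_le_iff'.mpr (by rw [mem_mk4 ha le_rfl (Nat.zero_le 1)]; simp [List.getD])
  simp only [GammaInf, Set.mem_setOf_eq]
  omega

lemma col4_mem_gammaInf : mk4 1 1 1 1 ∈ GammaInf := by
  have h0 : (mk4 1 1 1 1).colLen 0 ≤ 4 :=
    colLen_le_iff'.mpr (by rw [mem_mk4 le_rfl le_rfl le_rfl]; simp [List.getD])
  have h1 : (mk4 1 1 1 1).colLen 1 ≤ 0 :=
    colLen_le_iff'.mpr (by rw [mem_mk4 le_rfl le_rfl le_rfl]; simp [List.getD])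
  simp only [GammaInf, Set.mem_setOf_eq]
  omega

lemma gammaInf_classify {μ : YoungDiagram} (h : μ ∈ GammaInf) :
    (∃ a b, b ≤ a ∧ μ = mk4 a b 0 0) ∨ (∃ a, 1 ≤ a ∧ μ = mk4 a 1 1 0) ∨ μ = mk4 1 1 1 1 := by
  simp only [GammaInf, Set.mem_setOf_eq] at h
  have a10 : μ.rowLen 1 ≤ μ.rowLen 0 := μ.rowLen_anti 0 1 (by omega)
  have a21 : μ.rowLen 2 ≤ μ.rowLen 1 := μ.rowLen_anti 1 2 (by omega)
  have a32 : μ.rowLen 3 ≤ μ.rowLen 2 := μ.rowLen_anti 2 3 (by omega)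
  by_cases hr2 : μ.rowLen 2 = 0
  · left
    refine ⟨μ.rowLen 0, μ.rowLen 1, a10, yd_ext_rowLen fun i => ?_⟩
    rw [rowLen_mk4 a10 (by omega) le_rfl]
    match i with
    | 0 => rfl
    | 1 => rfl
    | (n+2) =>
      have : μ.rowLen (n+2) ≤ μ.rowLen 2 := μ.rowLen_anti 2 (n+2) (by omega)
      have : μ.rowLen (n+2) = 0 := by omega
      rw [this]
      match n with
      | 0 => rfl
      | 1 => rfl
      | (k+2) => rfl
  · have hc0 : 2 < μ.colLen 0 :=
      YoungDiagram.mem_iff_lt_colLen.mp (YoungDiagram.mem_iff_lt_rowLen.mpr (by omega))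
    have hr1 : μ.rowLen 1 ≤ 1 := by
      by_contra hr1
      have hm : (1, 1) ∈ μ := YoungDiagram.mem_iff_lt_rowLen.mpr (by omega)
      have := YoungDiagram.mem_iff_lt_colLen.mp hm
      omega
    have hr1' : μ.rowLen 1 = 1 := by omega
    have hr2' : μ.rowLen 2 = 1 := by omega
    by_cases hr3 : μ.rowLen 3 = 0
    · right; left
      refine ⟨μ.rowLen 0, by omega, yd_ext_rowLen fun i => ?_⟩
      rw [rowLen_mk4 (by omega) le_rfl (by omega)]
      match i with
      | 0 => rfl
      | 1 => exact hr1'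
      | 2 => exact hr2'
      | (n+3) =>
        have : μ.rowLen (n+3) ≤ μ.rowLen 3 := μ.rowLen_anti 3 (n+3) (by omega)
        have h0 : μ.rowLen (n+3) = 0 := by omega
        rw [h0]
        match n with
        | 0 => rfl
        | (k+1) => rfl
    · right; right
      have hc0' : 3 < μ.colLen 0 :=
        YoungDiagram.mem_iff_lt_colLen.mp (YoungDiagram.mem_iff_lt_rowLen.mpr (by omega))
      have hc1 : μ.colLen 1 = 0 := by omega
      have hr0 : μ.rowLen 0 ≤ 1 := by
        by_contra hr0
        have hm : (0, 1) ∈ μ := YoungDiagram.mem_iff_lt_rowLen.mpr (by omega)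
        have := YoungDiagram.mem_iff_lt_colLen.mp hm
        omega
      have hr4 : μ.rowLen 4 = 0 := by
        by_contra hr4
        have hm : (4, 0) ∈ μ := YoungDiagram.mem_iff_lt_rowLen.mpr (by omega)
        have := YoungDiagram.mem_iff_lt_colLen.mp hm
        omega
      refine yd_ext_rowLen fun i => ?_
      rw [rowLen_mk4 le_rfl le_rfl le_rfl]
      match i with
      | 0 => show μ.rowLen 0 = 1; omega
      | 1 => exact hr1'
      | 2 => exact hr2'
      | 3 => show μ.rowLen 3 = 1; omega
      | (n+4) =>
        have : μ.rowLen (n+4) ≤ μ.rowLen 4 := μ.rowLen_anti 4 (n+4) (by omega)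
        have h0 : μ.rowLen (n+4) = 0 := by omega
        rw [h0]
        rfl

end Gamma
section Fin4
open YoungDiagram

lemma yd_cells_injective : Function.Injective (fun μ : YoungDiagram => μ.cells) := by
  intro μ ν h
  cases μ; cases ν; simpa using h

lemma le_self_finite (x : YoungDiagram) : {y : YoungDiagram | y ≤ x}.Finite := by
  apply Set.Finite.of_finite_image (f := fun y => y.cells)
  · apply Set.Finite.subset (x.cells.powerset : Finset (Finset (ℕ × ℕ))).finite_toSet
    rintro s ⟨y, hy, rfl⟩
    simp only [Finset.coe_powerset, Set.mem_preimage, Set.mem_powerset_iff,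
      Finset.coe_subset]
    exact YoungDiagram.cells_subset_iff.mpr hy
  · exact fun y _ y' _ h => yd_cells_injective h

lemma addBox_above_finite (x : YoungDiagram) : {y : YoungDiagram | AddBox x y}.Finite := by
  classical
  set big : Finset (ℕ × ℕ) :=
    x.cells ∪ (Finset.range (x.colLen 0 + 1) ×ˢ Finset.range (x.rowLen 0 + 1)) with hbig
  apply Set.Finite.of_finite_image (f := fun y => y.cells)
  · apply Set.Finite.subset (big.powerset : Finset (Finset (ℕ × ℕ))).finite_toSet
    rintro s ⟨y, ⟨hle, hcard⟩, rfl⟩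
    simp only [Finset.coe_powerset, Set.mem_preimage, Set.mem_powerset_iff, Finset.coe_subset]
    intro c hc
    by_cases hcx : c ∈ x.cells
    · exact Finset.mem_union_left _ hcx
    · obtain ⟨i, j⟩ := c
      apply Finset.mem_union_right
      have hcy : (i, j) ∈ y := hc
      have hrow : j ≤ x.rowLen 0 := by
        have hr : j ≤ x.rowLen i := by
          by_contra hj
          -- then (i, x.rowLen i) ∈ y and it's a second new cell
          have h1 : (i, x.rowLen i) ∈ y := y.up_left_mem le_rfl (by omega) hcy
          have h2 : (i, x.rowLen i) ∉ x := by
            rw [YoungDiagram.mem_iff_lt_rowLen]; omega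
          -- two distinct cells of y outside x
          have hsub : x.cells ⊆ y.cells := YoungDiagram.cells_subset_iff.mpr hle
          have : ({(i, j), (i, x.rowLen i)} : Finset (ℕ × ℕ)) ⊆ y.cells \ x.cells := by
            intro d hd
            rcases Finset.mem_insert.mp hd with rfl | hd
            · exact Finset.mem_sdiff.mpr ⟨hcy, hcx⟩
            · rw [Finset.mem_singleton] at hd
              subst hd
              exact Finset.mem_sdiff.mpr ⟨h1, by simpa using h2⟩
          have hc2 : 2 ≤ (y.cells \ x.cells).card := by
            calc 2 = ({(i, j), (i, x.rowLen i)} : Finset (ℕ × ℕ)).card := by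
                      rw [Finset.card_insert_of_notMem (by simp; omega), Finset.card_singleton]
              _ ≤ _ := Finset.card_le_card this
          rw [Finset.card_sdiff_of_subset hsub] at hc2
          have hcc : y.cells.card = x.cells.card + 1 := hcard
          omega
        exact le_trans hr (x.rowLen_anti 0 i (Nat.zero_le i))
      have hcol : i ≤ x.colLen 0 := by
        have hr : i ≤ x.colLen j := by
          by_contra hi
          have h1 : (x.colLen j, j) ∈ y := y.up_left_mem (by omega) le_rfl hcy
          have h2 : (x.colLen j, j) ∉ x := by
            rw [YoungDiagram.mem_iff_lt_colLen]; omega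
          have hsub : x.cells ⊆ y.cells := YoungDiagram.cells_subset_iff.mpr hle
          have : ({(i, j), (x.colLen j, j)} : Finset (ℕ × ℕ)) ⊆ y.cells \ x.cells := by
            intro d hd
            rcases Finset.mem_insert.mp hd with rfl | hd
            · exact Finset.mem_sdiff.mpr ⟨hcy, hcx⟩
            · rw [Finset.mem_singleton] at hd
              subst hd
              exact Finset.mem_sdiff.mpr ⟨h1, by simpa using h2⟩
          have hc2 : 2 ≤ (y.cells \ x.cells).card := by
            calc 2 = ({(i, j), (x.colLen j, j)} : Finset (ℕ × ℕ)).card := by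
                      rw [Finset.card_insert_of_notMem (by simp; omega), Finset.card_singleton]
              _ ≤ _ := Finset.card_le_card this
          rw [Finset.card_sdiff_of_subset hsub] at hc2
          have hcc : y.cells.card = x.cells.card + 1 := hcard
          omega
        exact le_trans hr (x.colLen_anti 0 j (Nat.zero_le j))
      simp only [Finset.mem_product, Finset.mem_range]
      omega
  · exact fun y _ y' _ h => yd_cells_injective h

lemma adjBox_nbhd_finite (S : Set YoungDiagram) (x : YoungDiagram) :
    {y : YoungDiagram | y ∈ S ∧ AdjBox y x}.Finite := by
  apply Set.Finite.subset ((le_self_finite x).union (addBox_above_finite x))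
  rintro y ⟨_, hadj⟩
  rcases hadj with h | h
  · exact Or.inl h.1
  · exact Or.inr h

lemma addBox_nbhd_finite (S : Set YoungDiagram) (x : YoungDiagram) :
    {y : YoungDiagram | y ∈ S ∧ AddBox y x}.Finite := by
  apply Set.Finite.subset (le_self_finite x)
  rintro y ⟨_, h⟩
  exact h.1

end Fin4

section BwDef

def Bw : ℕ → ℕ → ℕ
  | 0, d => if d = 0 then 1 else 0
  | (m+1), d => (if d = 0 then 0 else Bw m (d-1)) + Bw m (d+1)

lemma Bw_succ_pos (m : ℕ) {d : ℕ} (hd : 1 ≤ d) :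
    Bw (m+1) d = Bw m (d-1) + Bw m (d+1) := by
  rw [Bw, if_neg (by omega)]

lemma Bw_succ_zero (m : ℕ) : Bw (m+1) 0 = Bw m 1 := by
  rw [Bw, if_pos rfl]; norm_num

lemma Bw_zero (d : ℕ) : Bw 0 d = if d = 0 then 1 else 0 := rfl

lemma Bw_eq_zero_of_lt : ∀ m d, m < d → Bw m d = 0 := by
  intro m
  induction m with
  | zero => intro d hd; rw [Bw_zero, if_neg (by omega)]
  | succ m ih =>
    intro d hd
    rw [Bw_succ_pos m (by omega), ih (d-1) (by omega), ih (d+1) (by omega)]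

lemma choose2_succ (x : ℕ) : (x+1).choose 2 = x.choose 2 + x := by
  simp [Nat.choose_succ_succ]
  omega

lemma choose2_add (x y : ℕ) : (x+y).choose 2 = x.choose 2 + y.choose 2 + x * y := by
  induction y with
  | zero => simp
  | succ y ih =>
    rw [← Nat.add_assoc, choose2_succ, ih, choose2_succ, Nat.mul_succ]
    ring

lemma choose2_sq (x : ℕ) : (x+1).choose 2 + x.choose 2 = x * x := by
  induction x with
  | zero => simp
  | succ x ih =>
    rw [choose2_succ (x+1), choose2_succ x]
    rw [choose2_succ] at ih
    have h2 : (x+1)*(x+1) = x*x + 2*x + 1 := by ring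
    rw [h2]
    omega

end BwDef
section TabMaster
open YoungDiagram

lemma eq_mk4_of_rowLen2 {μ : YoungDiagram} (h2 : μ.rowLen 2 = 0) :
    μ = mk4 (μ.rowLen 0) (μ.rowLen 1) 0 0 := by
  have a10 : μ.rowLen 1 ≤ μ.rowLen 0 := μ.rowLen_anti 0 1 (by omega)
  refine yd_ext_rowLen fun i => ?_
  rw [rowLen_mk4 a10 (Nat.zero_le _) le_rfl]
  match i with
  | 0 => rfl
  | 1 => rfl
  | (n+2) =>
    have : μ.rowLen (n+2) ≤ μ.rowLen 2 := μ.rowLen_anti 2 (n+2) (by omega)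
    have h0 : μ.rowLen (n+2) = 0 := by omega
    rw [h0]
    match n with
    | 0 => rfl
    | 1 => rfl
    | (k+2) => rfl

lemma card_bot : (⊥ : YoungDiagram).card = 0 := by
  simp [YoungDiagram.card, YoungDiagram.cells_bot]

noncomputable def tcount (m : ℕ) (μ : YoungDiagram) : ℕ :=
  pcount AddBox Set.univ ⊥ m μ

noncomputable def ocount (m : ℕ) (μ : YoungDiagram) : ℕ :=
  pcount AdjBox GammaInf ⊥ m μ

lemma mk4_bot_iff {a b : ℕ} (hb : b ≤ a) : mk4 a b 0 0 = ⊥ ↔ (a = 0 ∧ b = 0) := by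
  rw [bot_eq_mk4, mk4_eq_iff hb b.zero_le le_rfl le_rfl le_rfl le_rfl]
  omega

lemma tab_master : ∀ m a b, b ≤ a →
    tcount m (mk4 a b 0 0) = if a + b = m then Bw m (a - b) else 0 := by
  intro m
  induction m with
  | zero =>
    intro a b hb
    rw [tcount, pcount_zero]
    by_cases h : a = 0 ∧ b = 0
    · obtain ⟨rfl, rfl⟩ := h
      rw [if_pos ⟨(mk4_bot_iff le_rfl).mpr ⟨rfl, rfl⟩, Set.mem_univ _⟩, if_pos rfl]
      rfl
    · rw [if_neg, if_neg (by omega)]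
      rintro ⟨he, -⟩
      exact h ((mk4_bot_iff hb).mp he)
  | succ m ih =>
    intro a b hb
    have Hfin : ∀ x, {y : YoungDiagram | y ∈ Set.univ ∧ AddBox y x}.Finite :=
      addBox_nbhd_finite Set.univ
    -- helper to identify an in-neighbour
    have hid : ∀ y : YoungDiagram, AddBox y (mk4 a b 0 0) →
        ∃ p q, q ≤ p ∧ y = mk4 p q 0 0 ∧ p ≤ a ∧ q ≤ b ∧ a + b = p + q + 1 := by
      intro y hAdd
      have hle : y ≤ mk4 a b 0 0 := hAdd.1
      have h2 : y.rowLen 2 = 0 := by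
        have := yd_le_iff.mp hle 2
        rw [rowLen_mk4 hb b.zero_le le_rfl] at this
        simpa using this
      have hy := eq_mk4_of_rowLen2 h2
      have hq : y.rowLen 1 ≤ y.rowLen 0 := y.rowLen_anti 0 1 (by omega)
      rw [hy] at hAdd
      rw [addBox_mk4_iff hq (Nat.zero_le _) le_rfl hb b.zero_le le_rfl] at hAdd
      exact ⟨y.rowLen 0, y.rowLen 1, hq, hy, by omega, by omega, by omega⟩
    rcases Nat.eq_zero_or_pos b with rfl | hb1
    · rcases Nat.eq_zero_or_pos a with rfl | ha1
      · -- x = ⊥ : no in-neighbours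
        rw [tcount, pcount_succ Hfin m _ ∅ ?hN, if_pos (Set.mem_univ _), Finset.sum_empty,
          if_neg (by omega)]
        case hN =>
          intro y _ hAdd
          obtain ⟨p, q, hpq, rfl, h1, h2, h3⟩ := hid y hAdd
          omega
      · -- x = (a, 0), a ≥ 1
        rw [tcount, pcount_succ Hfin m _ {mk4 (a-1) 0 0 0} ?hN, if_pos (Set.mem_univ _),
          Finset.sum_singleton, if_pos ?hAdd]
        case hN =>
          intro y _ hAdd
          obtain ⟨p, q, hpq, rfl, h1, h2, h3⟩ := hid y hAdd
          rw [Finset.mem_singleton,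
            mk4_eq_iff hpq q.zero_le le_rfl (Nat.zero_le _) le_rfl le_rfl]
          omega
        case hAdd =>
          rw [addBox_mk4_iff (Nat.zero_le _) le_rfl le_rfl (Nat.zero_le _) le_rfl le_rfl]
          omega
        have e0 := ih (a-1) 0 (Nat.zero_le _)
        rw [tcount] at e0
        rw [e0]
        by_cases hm : a + 0 = m + 1
        · rw [if_pos (show a - 1 + 0 = m by omega), if_pos hm,
            Bw_succ_pos m (show 1 ≤ a - 0 by omega),
            Bw_eq_zero_of_lt m (a - 0 + 1) (by omega),
            show a - 0 - 1 = a - 1 - 0 by omega]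
          omega
        · rw [if_neg (show ¬(a - 1 + 0 = m) by omega), if_neg hm]
    · -- b ≥ 1
      rcases Nat.lt_or_ge b a with hab | hab
      · -- a > b ≥ 1 : two in-neighbours
        rw [tcount, pcount_succ Hfin m _ {mk4 (a-1) b 0 0, mk4 a (b-1) 0 0} ?hN,
          if_pos (Set.mem_univ _), Finset.sum_insert ?hmem, Finset.sum_singleton,
          if_pos ?hA1, if_pos ?hA2]
        case hN =>
          intro y _ hAdd
          obtain ⟨p, q, hpq, rfl, h1, h2, h3⟩ := hid y hAdd
          rw [Finset.mem_insert, Finset.mem_singleton,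
            mk4_eq_iff hpq q.zero_le le_rfl (by omega) (Nat.zero_le _) le_rfl,
            mk4_eq_iff hpq q.zero_le le_rfl (by omega) (Nat.zero_le _) le_rfl]
          omega
        case hmem =>
          rw [Finset.mem_singleton,
            mk4_eq_iff (by omega) (Nat.zero_le _) le_rfl (by omega) (Nat.zero_le _) le_rfl]
          omega
        case hA1 =>
          rw [addBox_mk4_iff (by omega) (Nat.zero_le _) le_rfl hb b.zero_le le_rfl]
          omega
        case hA2 =>
          rw [addBox_mk4_iff (by omega) (Nat.zero_le _) le_rfl hb b.zero_le le_rfl]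
          omega
        have e0 := ih (a-1) b (by omega)
        have e1 := ih a (b-1) (by omega)
        rw [tcount] at e0 e1
        rw [e0, e1]
        by_cases hm : a + b = m + 1
        · rw [if_pos (show a - 1 + b = m by omega), if_pos (show a + (b-1) = m by omega),
            if_pos hm, Bw_succ_pos m (show 1 ≤ a - b by omega),
            show a - 1 - b = a - b - 1 by omega, show a - (b-1) = a - b + 1 by omega]
        · rw [if_neg (show ¬(a - 1 + b = m) by omega),
            if_neg (show ¬(a + (b-1) = m) by omega), if_neg hm]
      · -- a = b ≥ 1 : one in-neighbour
        have hab' : a = b := by omega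
        subst hab'
        rw [tcount, pcount_succ Hfin m _ {mk4 a (a-1) 0 0} ?hN, if_pos (Set.mem_univ _),
          Finset.sum_singleton, if_pos ?hA1]
        case hN =>
          intro y _ hAdd
          obtain ⟨p, q, hpq, rfl, h1, h2, h3⟩ := hid y hAdd
          rw [Finset.mem_singleton,
            mk4_eq_iff hpq q.zero_le le_rfl (by omega) (Nat.zero_le _) le_rfl]
          omega
        case hA1 =>
          rw [addBox_mk4_iff (by omega) (Nat.zero_le _) le_rfl le_rfl a.zero_le le_rfl]
          omega
        have e0 := ih a (a-1) (by omega)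
        rw [tcount] at e0
        rw [e0]
        by_cases hm : a + a = m + 1
        · rw [if_pos (show a + (a-1) = m by omega), if_pos hm,
            show a - (a-1) = 1 by omega, show a - a = 0 by omega, Bw_succ_zero]
        · rw [if_neg (show ¬(a + (a-1) = m) by omega), if_neg hm]

end TabMaster
section OscMaster
open YoungDiagram

lemma adjBox_mk4_iff {p q r s a b c d : ℕ} (h1 : q ≤ p) (h2 : r ≤ q) (h3 : s ≤ r)
    (h4 : b ≤ a) (h5 : c ≤ b) (h6 : d ≤ c) :
    AdjBox (mk4 p q r s) (mk4 a b c d) ↔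
      ((p ≤ a ∧ q ≤ b ∧ r ≤ c ∧ s ≤ d ∧ a + b + c + d = p + q + r + s + 1) ∨
       (a ≤ p ∧ b ≤ q ∧ c ≤ r ∧ d ≤ s ∧ p + q + r + s = a + b + c + d + 1)) := by
  rw [AdjBox, addBox_mk4_iff h1 h2 h3 h4 h5 h6, addBox_mk4_iff h4 h5 h6 h1 h2 h3]

lemma mk4_ne {p q r s p' q' r' s' : ℕ} (h1 : q ≤ p) (h2 : r ≤ q) (h3 : s ≤ r)
    (h1' : q' ≤ p') (h2' : r' ≤ q') (h3' : s' ≤ r')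
    (hne : ¬(p = p' ∧ q = q' ∧ r = r' ∧ s = s')) : mk4 p q r s ≠ mk4 p' q' r' s' :=
  fun h => hne ((mk4_eq_iff h1 h2 h3 h1' h2' h3').mp h)

lemma choose2_addone (x y : ℕ) :
    (x + y + 1).choose 2 = (x + 1).choose 2 + (y + 1).choose 2 + x * y := by
  rw [show x + y + 1 = (x + 1) + y by ring, choose2_add, choose2_succ y]
  ring

lemma osc_master : ∀ m,
    (∀ a b, 1 ≤ b → b ≤ a →
      ocount m (mk4 a b 0 0) = Bw m (a + b) * Bw m (a - b)) ∧
    (∀ a, ocount m (mk4 a 0 0 0) = (Bw m a + 1).choose 2) ∧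
    (∀ a, 1 ≤ a → ocount m (mk4 a 1 1 0) = (Bw m a).choose 2) ∧
    (ocount m (mk4 1 1 1 1) = (Bw m 0).choose 2) := by
  intro m
  induction m with
  | zero =>
    refine ⟨?_, ?_, ?_, ?_⟩
    · intro a b hb1 hba
      rw [ocount, pcount_zero, if_neg, Bw_zero, if_neg (by omega), Nat.zero_mul]
      rintro ⟨he, -⟩
      have := (mk4_bot_iff hba).mp he
      omega
    · intro a
      rcases Nat.eq_zero_or_pos a with rfl | ha
      · rw [ocount, pcount_zero, if_pos ⟨(mk4_bot_iff le_rfl).mpr ⟨rfl, rfl⟩, bot_mem_gammaInf⟩]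
        rfl
      · rw [ocount, pcount_zero, if_neg, Bw_zero, if_neg (by omega)]
        · rfl
        · rintro ⟨he, -⟩
          have := (mk4_bot_iff (Nat.zero_le a)).mp he
          omega
    · intro a ha
      rw [ocount, pcount_zero, if_neg, Bw_zero, if_neg (by omega)]
      · rfl
      · rintro ⟨he, -⟩
        rw [bot_eq_mk4] at he
        have := (mk4_eq_iff ha le_rfl (Nat.zero_le 1) le_rfl le_rfl le_rfl).mp he
        omega
    · rw [ocount, pcount_zero, if_neg, Bw_zero, if_pos rfl]
      · rfl
      · rintro ⟨he, -⟩
        rw [bot_eq_mk4] at he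
        have := (mk4_eq_iff le_rfl le_rfl le_rfl le_rfl le_rfl le_rfl).mp he
        omega
  | succ m ih =>
    obtain ⟨ih1, ih2, ih3, ih4⟩ := ih
    have Hfin : ∀ x, {y : YoungDiagram | y ∈ GammaInf ∧ AdjBox y x}.Finite :=
      adjBox_nbhd_finite GammaInf
    refine ⟨?_, ?_, ?_, ?_⟩
    · -- two-row (a,b), 1 ≤ b ≤ a
      intro a b hb1 hba
      rcases Nat.lt_or_ge 1 b with hb2 | hb1'
      · -- b ≥ 2
        rcases Nat.lt_or_ge b a with hab | hab
        · -- a > b ≥ 2 : four neighbours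
          rw [ocount, pcount_succ Hfin m _
              {mk4 (a+1) b 0 0, mk4 (a-1) b 0 0, mk4 a (b+1) 0 0, mk4 a (b-1) 0 0} ?cov,
            if_pos (row2_mem_gammaInf hba)]
          case cov =>
            intro y hyS hyadj
            simp only [Finset.mem_insert, Finset.mem_singleton]
            rcases gammaInf_classify hyS with ⟨p, q, hpq, rfl⟩ | ⟨p, hp, rfl⟩ | rfl
            · rw [adjBox_mk4_iff hpq q.zero_le le_rfl hba b.zero_le le_rfl] at hyadj
              rw [mk4_eq_iff hpq q.zero_le le_rfl (by omega) b.zero_le le_rfl,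
                mk4_eq_iff hpq q.zero_le le_rfl (by omega) b.zero_le le_rfl,
                mk4_eq_iff hpq q.zero_le le_rfl (by omega) (b+1).zero_le le_rfl,
                mk4_eq_iff hpq q.zero_le le_rfl (by omega) (b-1).zero_le le_rfl]
              omega
            · rw [adjBox_mk4_iff hp le_rfl (Nat.zero_le 1) hba b.zero_le le_rfl] at hyadj
              exfalso; omega
            · rw [adjBox_mk4_iff le_rfl le_rfl le_rfl hba b.zero_le le_rfl] at hyadj
              exfalso; omega
          rw [Finset.sum_insert (by
              intro hmem
              simp only [Finset.mem_insert, Finset.mem_singleton] at hmem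
              rcases hmem with h | h | h <;> exact mk4_ne (by omega) (by omega) (by omega)
                (by omega) (by omega) (by omega) (by omega) h),
            Finset.sum_insert (by
              intro hmem
              simp only [Finset.mem_insert, Finset.mem_singleton] at hmem
              rcases hmem with h | h <;> exact mk4_ne (by omega) (by omega) (by omega)
                (by omega) (by omega) (by omega) (by omega) h),
            Finset.sum_insert (by
              intro hmem
              rw [Finset.mem_singleton] at hmem
              exact mk4_ne (by omega) (by omega) (by omega) (by omega) (by omega) (by omega)
                (by omega) hmem),
            Finset.sum_singleton,
            if_pos ((adjBox_mk4_iff (by omega) (Nat.zero_le _) le_rfl hba b.zero_le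
              le_rfl).mpr (by omega)),
            if_pos ((adjBox_mk4_iff (by omega) (Nat.zero_le _) le_rfl hba b.zero_le
              le_rfl).mpr (by omega)),
            if_pos ((adjBox_mk4_iff (by omega) (Nat.zero_le _) le_rfl hba b.zero_le
              le_rfl).mpr (by omega)),
            if_pos ((adjBox_mk4_iff (by omega) (Nat.zero_le _) le_rfl hba b.zero_le
              le_rfl).mpr (by omega))]
          have e1 := ih1 (a+1) b (by omega) (by omega)
          have e2 := ih1 (a-1) b (by omega) (by omega)
          have e3 := ih1 a (b+1) (by omega) (by omega)
          have e4 := ih1 a (b-1) (by omega) (by omega)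
          rw [ocount] at e1 e2 e3 e4
          rw [e1, e2, e3, e4, Bw_succ_pos m (show 1 ≤ a + b by omega),
            Bw_succ_pos m (show 1 ≤ a - b by omega),
            show a + 1 + b = a + b + 1 by omega, show a + 1 - b = a - b + 1 by omega,
            show a - 1 + b = a + b - 1 by omega, show a - 1 - b = a - b - 1 by omega,
            show a + (b + 1) = a + b + 1 by omega, show a - (b + 1) = a - b - 1 by omega,
            show a + (b - 1) = a + b - 1 by omega, show a - (b - 1) = a - b + 1 by omega]
          ring
        · -- a = b ≥ 2 : two neighbours
          have hab' : a = b := by omega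
          subst hab'
          rw [ocount, pcount_succ Hfin m _ {mk4 (a+1) a 0 0, mk4 a (a-1) 0 0} ?cov,
            if_pos (row2_mem_gammaInf hba)]
          case cov =>
            intro y hyS hyadj
            simp only [Finset.mem_insert, Finset.mem_singleton]
            rcases gammaInf_classify hyS with ⟨p, q, hpq, rfl⟩ | ⟨p, hp, rfl⟩ | rfl
            · rw [adjBox_mk4_iff hpq q.zero_le le_rfl hba a.zero_le le_rfl] at hyadj
              rw [mk4_eq_iff hpq q.zero_le le_rfl (by omega) a.zero_le le_rfl,
                mk4_eq_iff hpq q.zero_le le_rfl (by omega) (a-1).zero_le le_rfl]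
              omega
            · rw [adjBox_mk4_iff hp le_rfl (Nat.zero_le 1) hba a.zero_le le_rfl] at hyadj
              exfalso; omega
            · rw [adjBox_mk4_iff le_rfl le_rfl le_rfl hba a.zero_le le_rfl] at hyadj
              exfalso; omega
          rw [Finset.sum_insert (by
              intro hmem
              rw [Finset.mem_singleton] at hmem
              exact mk4_ne (by omega) (by omega) (by omega) (by omega) (by omega) (by omega)
                (by omega) hmem),
            Finset.sum_singleton,
            if_pos ((adjBox_mk4_iff (by omega) (Nat.zero_le _) le_rfl hba a.zero_le
              le_rfl).mpr (by omega)),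
            if_pos ((adjBox_mk4_iff (by omega) (Nat.zero_le _) le_rfl hba a.zero_le
              le_rfl).mpr (by omega))]
          have e1 := ih1 (a+1) a (by omega) (by omega)
          have e2 := ih1 a (a-1) (by omega) (by omega)
          rw [ocount] at e1 e2
          rw [e1, e2, Bw_succ_pos m (show 1 ≤ a + a by omega),
            show a - a = 0 by omega, Bw_succ_zero,
            show a + 1 + a = a + a + 1 by omega, show a + 1 - a = 1 by omega,
            show a + (a - 1) = a + a - 1 by omega, show a - (a - 1) = 1 by omega]
          ring
      · -- b = 1
        have hb' : b = 1 := by omega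
        subst hb'
        rcases Nat.lt_or_ge 1 a with ha2 | ha1'
        · -- a ≥ 2 : five neighbours
          rw [ocount, pcount_succ Hfin m _
              {mk4 (a+1) 1 0 0, mk4 (a-1) 1 0 0, mk4 a 2 0 0, mk4 a 0 0 0, mk4 a 1 1 0} ?cov,
            if_pos (row2_mem_gammaInf hba)]
          case cov =>
            intro y hyS hyadj
            simp only [Finset.mem_insert, Finset.mem_singleton]
            rcases gammaInf_classify hyS with ⟨p, q, hpq, rfl⟩ | ⟨p, hp, rfl⟩ | rfl
            · rw [adjBox_mk4_iff hpq q.zero_le le_rfl hba (Nat.zero_le 1) le_rfl] at hyadj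
              rw [mk4_eq_iff hpq q.zero_le le_rfl (by omega) (Nat.zero_le 1) le_rfl,
                mk4_eq_iff hpq q.zero_le le_rfl (by omega) (Nat.zero_le 1) le_rfl,
                mk4_eq_iff hpq q.zero_le le_rfl (by omega) (Nat.zero_le 2) le_rfl,
                mk4_eq_iff hpq q.zero_le le_rfl (Nat.zero_le a) le_rfl le_rfl]
              omega
            · rw [adjBox_mk4_iff hp le_rfl (Nat.zero_le 1) hba (Nat.zero_le 1) le_rfl] at hyadj
              rw [mk4_eq_iff hp le_rfl (Nat.zero_le 1) (by omega) le_rfl (Nat.zero_le 1)]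
              omega
            · rw [adjBox_mk4_iff le_rfl le_rfl le_rfl hba (Nat.zero_le 1) le_rfl] at hyadj
              exfalso; omega
          rw [Finset.sum_insert (by
              intro hmem
              simp only [Finset.mem_insert, Finset.mem_singleton] at hmem
              rcases hmem with h | h | h | h <;> exact mk4_ne (by omega) (by omega) (by omega)
                (by omega) (by omega) (by omega) (by omega) h),
            Finset.sum_insert (by
              intro hmem
              simp only [Finset.mem_insert, Finset.mem_singleton] at hmem
              rcases hmem with h | h | h <;> exact mk4_ne (by omega) (by omega) (by omega)
                (by omega) (by omega) (by omega) (by omega) h),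
            Finset.sum_insert (by
              intro hmem
              simp only [Finset.mem_insert, Finset.mem_singleton] at hmem
              rcases hmem with h | h <;> exact mk4_ne (by omega) (by omega) (by omega)
                (by omega) (by omega) (by omega) (by omega) h),
            Finset.sum_insert (by
              intro hmem
              rw [Finset.mem_singleton] at hmem
              exact mk4_ne (by omega) (by omega) (by omega) (by omega) (by omega) (by omega)
                (by omega) hmem),
            Finset.sum_singleton,
            if_pos ((adjBox_mk4_iff (by omega) (Nat.zero_le _) le_rfl hba (Nat.zero_le 1)
              le_rfl).mpr (by omega)),
            if_pos ((adjBox_mk4_iff (by omega) (Nat.zero_le _) le_rfl hba (Nat.zero_le 1)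
              le_rfl).mpr (by omega)),
            if_pos ((adjBox_mk4_iff (by omega) (Nat.zero_le _) le_rfl hba (Nat.zero_le 1)
              le_rfl).mpr (by omega)),
            if_pos ((adjBox_mk4_iff (by omega) (Nat.zero_le _) le_rfl hba (Nat.zero_le 1)
              le_rfl).mpr (by omega)),
            if_pos ((adjBox_mk4_iff (by omega) (by omega) (by omega) hba (Nat.zero_le 1)
              le_rfl).mpr (by omega))]
          have e1 := ih1 (a+1) 1 le_rfl (by omega)
          have e2 := ih1 (a-1) 1 le_rfl (by omega)
          have e3 := ih1 a 2 (by omega) (by omega)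
          have e4 := ih2 a
          have e5 := ih3 a (by omega)
          rw [ocount] at e1 e2 e3 e4 e5
          rw [e1, e2, e3, e4, e5, Bw_succ_pos m (show 1 ≤ a + 1 by omega),
            Bw_succ_pos m (show 1 ≤ a - 1 by omega),
            show a + 1 + 1 = a + 2 by omega, show a + 1 - 1 = a by omega,
            show a - 1 + 1 = a by omega, show a - 1 - 1 = a - 2 by omega,
            show a + 1 + 1 = a + 2 by omega]
          have hsq := choose2_sq (Bw m a)
          have hexp : (Bw m a + Bw m (a+2)) * (Bw m (a-2) + Bw m a)
              = Bw m (a+2) * Bw m a + Bw m a * Bw m (a-2) + Bw m (a+2) * Bw m (a-2)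
                + Bw m a * Bw m a := by ring
          rw [hexp, ← hsq]
          omega
        · -- a = 1, b = 1 : three neighbours
          have ha' : a = 1 := by omega
          subst ha'
          rw [ocount, pcount_succ Hfin m _ {mk4 2 1 0 0, mk4 1 0 0 0, mk4 1 1 1 0} ?cov,
            if_pos (row2_mem_gammaInf le_rfl)]
          case cov =>
            intro y hyS hyadj
            simp only [Finset.mem_insert, Finset.mem_singleton]
            rcases gammaInf_classify hyS with ⟨p, q, hpq, rfl⟩ | ⟨p, hp, rfl⟩ | rfl
            · rw [adjBox_mk4_iff hpq q.zero_le le_rfl le_rfl (Nat.zero_le 1) le_rfl] at hyadj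
              rw [mk4_eq_iff hpq q.zero_le le_rfl (by omega) (Nat.zero_le 1) le_rfl,
                mk4_eq_iff hpq q.zero_le le_rfl (Nat.zero_le 1) le_rfl le_rfl]
              omega
            · rw [adjBox_mk4_iff hp le_rfl (Nat.zero_le 1) le_rfl (Nat.zero_le 1)
                le_rfl] at hyadj
              rw [mk4_eq_iff hp le_rfl (Nat.zero_le 1) le_rfl le_rfl (Nat.zero_le 1)]
              omega
            · rw [adjBox_mk4_iff le_rfl le_rfl le_rfl le_rfl (Nat.zero_le 1) le_rfl] at hyadj
              exfalso; omega
          rw [Finset.sum_insert (by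
              intro hmem
              simp only [Finset.mem_insert, Finset.mem_singleton] at hmem
              rcases hmem with h | h <;> exact mk4_ne (by omega) (by omega) (by omega)
                (by omega) (by omega) (by omega) (by omega) h),
            Finset.sum_insert (by
              intro hmem
              rw [Finset.mem_singleton] at hmem
              exact mk4_ne (by omega) (by omega) (by omega) (by omega) (by omega) (by omega)
                (by omega) hmem),
            Finset.sum_singleton,
            if_pos ((adjBox_mk4_iff (by omega) (Nat.zero_le _) le_rfl le_rfl (Nat.zero_le 1)
              le_rfl).mpr (by omega)),
            if_pos ((adjBox_mk4_iff (by omega) (Nat.zero_le _) le_rfl le_rfl (Nat.zero_le 1)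
              le_rfl).mpr (by omega)),
            if_pos ((adjBox_mk4_iff (by omega) (by omega) (by omega) le_rfl (Nat.zero_le 1)
              le_rfl).mpr (by omega))]
          have e1 := ih1 2 1 le_rfl (by omega)
          have e2 := ih2 1
          have e3 := ih3 1 le_rfl
          rw [ocount] at e1 e2 e3
          rw [e1, e2, e3, Bw_succ_pos m (show 1 ≤ 1 + 1 by omega),
            show (1:ℕ) - 1 = 0 by omega, Bw_succ_zero,
            show (2:ℕ) + 1 = 1 + 1 + 1 by omega, show (2:ℕ) - 1 = 1 by omega]
          have hsq := choose2_sq (Bw m 1)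
          have hexp : (Bw m (1+1-1) + Bw m (1+1+1)) * Bw m 1
              = Bw m (1+1+1) * Bw m 1 + Bw m (1+1-1) * Bw m 1 := by ring
          rw [hexp, ← hsq]
    · -- one-row (a, 0)
      intro a
      rcases Nat.eq_zero_or_pos a with rfl | ha
      · -- a = 0 : bottom, single neighbour
        rw [ocount, show mk4 0 0 0 0 = ⊥ from bot_eq_mk4.symm,
          pcount_succ Hfin m _ {mk4 1 0 0 0} ?cov, if_pos bot_mem_gammaInf]
        case cov =>
          intro y hyS hyadj
          rw [Finset.mem_singleton, bot_eq_mk4] at *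
          rcases gammaInf_classify hyS with ⟨p, q, hpq, rfl⟩ | ⟨p, hp, rfl⟩ | rfl
          · rw [adjBox_mk4_iff hpq q.zero_le le_rfl le_rfl le_rfl le_rfl] at hyadj
            rw [mk4_eq_iff hpq q.zero_le le_rfl (Nat.zero_le 1) le_rfl le_rfl]
            omega
          · rw [adjBox_mk4_iff hp le_rfl (Nat.zero_le 1) le_rfl le_rfl le_rfl] at hyadj
            exfalso; omega
          · rw [adjBox_mk4_iff le_rfl le_rfl le_rfl le_rfl le_rfl le_rfl] at hyadj
            exfalso; omega
        rw [Finset.sum_singleton, if_pos (by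
            rw [bot_eq_mk4]
            exact (adjBox_mk4_iff (Nat.zero_le 1) le_rfl le_rfl le_rfl le_rfl le_rfl).mpr
              (by omega))]
        have e1 := ih2 1
        rw [ocount] at e1
        rw [e1, Bw_succ_zero]
      · -- a ≥ 1 : three neighbours
        rw [ocount, pcount_succ Hfin m _
            {mk4 (a+1) 0 0 0, mk4 (a-1) 0 0 0, mk4 a 1 0 0} ?cov,
          if_pos (row2_mem_gammaInf (Nat.zero_le a))]
        case cov =>
          intro y hyS hyadj
          simp only [Finset.mem_insert, Finset.mem_singleton]
          rcases gammaInf_classify hyS with ⟨p, q, hpq, rfl⟩ | ⟨p, hp, rfl⟩ | rfl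
          · rw [adjBox_mk4_iff hpq q.zero_le le_rfl (Nat.zero_le a) le_rfl le_rfl] at hyadj
            rw [mk4_eq_iff hpq q.zero_le le_rfl (Nat.zero_le (a+1)) le_rfl le_rfl,
              mk4_eq_iff hpq q.zero_le le_rfl (Nat.zero_le (a-1)) le_rfl le_rfl,
              mk4_eq_iff hpq q.zero_le le_rfl (by omega) (Nat.zero_le 1) le_rfl]
            omega
          · rw [adjBox_mk4_iff hp le_rfl (Nat.zero_le 1) (Nat.zero_le a) le_rfl
              le_rfl] at hyadj
            exfalso; omega
          · rw [adjBox_mk4_iff le_rfl le_rfl le_rfl (Nat.zero_le a) le_rfl le_rfl] at hyadj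
            exfalso; omega
        rw [Finset.sum_insert (by
            intro hmem
            simp only [Finset.mem_insert, Finset.mem_singleton] at hmem
            rcases hmem with h | h <;> exact mk4_ne (by omega) (by omega) (by omega)
              (by omega) (by omega) (by omega) (by omega) h),
          Finset.sum_insert (by
            intro hmem
            rw [Finset.mem_singleton] at hmem
            exact mk4_ne (by omega) (by omega) (by omega) (by omega) (by omega) (by omega)
              (by omega) hmem),
          Finset.sum_singleton,
          if_pos ((adjBox_mk4_iff (Nat.zero_le _) le_rfl le_rfl (Nat.zero_le a) le_rfl
            le_rfl).mpr (by omega)),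
          if_pos ((adjBox_mk4_iff (Nat.zero_le _) le_rfl le_rfl (Nat.zero_le a) le_rfl
            le_rfl).mpr (by omega)),
          if_pos ((adjBox_mk4_iff (by omega) (Nat.zero_le _) le_rfl (Nat.zero_le a) le_rfl
            le_rfl).mpr (by omega))]
        have e1 := ih2 (a+1)
        have e2 := ih2 (a-1)
        have e3 := ih1 a 1 le_rfl (by omega)
        rw [ocount] at e1 e2 e3
        rw [e1, e2, e3, Bw_succ_pos m (show 1 ≤ a by omega),
          choose2_addone (Bw m (a-1)) (Bw m (a+1))]
        have hcomm : Bw m (a+1) * Bw m (a-1) = Bw m (a-1) * Bw m (a+1) := Nat.mul_comm _ _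
        omega
    · -- hook (a,1,1)
      intro a ha
      rcases Nat.lt_or_ge 1 a with ha2 | ha1'
      · -- a ≥ 2 : three neighbours
        rw [ocount, pcount_succ Hfin m _
            {mk4 a 1 0 0, mk4 (a+1) 1 1 0, mk4 (a-1) 1 1 0} ?cov,
          if_pos (hook_mem_gammaInf ha)]
        case cov =>
          intro y hyS hyadj
          simp only [Finset.mem_insert, Finset.mem_singleton]
          rcases gammaInf_classify hyS with ⟨p, q, hpq, rfl⟩ | ⟨p, hp, rfl⟩ | rfl
          · rw [adjBox_mk4_iff hpq q.zero_le le_rfl ha le_rfl (Nat.zero_le 1)] at hyadj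
            rw [mk4_eq_iff hpq q.zero_le le_rfl (by omega) (Nat.zero_le 1) le_rfl]
            omega
          · rw [adjBox_mk4_iff hp le_rfl (Nat.zero_le 1) ha le_rfl (Nat.zero_le 1)] at hyadj
            rw [mk4_eq_iff hp le_rfl (Nat.zero_le 1) (by omega) le_rfl (Nat.zero_le 1),
              mk4_eq_iff hp le_rfl (Nat.zero_le 1) (by omega) le_rfl (Nat.zero_le 1)]
            omega
          · rw [adjBox_mk4_iff le_rfl le_rfl le_rfl ha le_rfl (Nat.zero_le 1)] at hyadj
            exfalso; omega
        rw [Finset.sum_insert (by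
            intro hmem
            simp only [Finset.mem_insert, Finset.mem_singleton] at hmem
            rcases hmem with h | h <;> exact mk4_ne (by omega) (by omega) (by omega)
              (by omega) (by omega) (by omega) (by omega) h),
          Finset.sum_insert (by
            intro hmem
            rw [Finset.mem_singleton] at hmem
            exact mk4_ne (by omega) (by omega) (by omega) (by omega) (by omega) (by omega)
              (by omega) hmem),
          Finset.sum_singleton,
          if_pos ((adjBox_mk4_iff (by omega) (Nat.zero_le _) le_rfl ha le_rfl
            (Nat.zero_le 1)).mpr (by omega)),
          if_pos ((adjBox_mk4_iff (by omega) (by omega) (Nat.zero_le 1) ha le_rfl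
            (Nat.zero_le 1)).mpr (by omega)),
          if_pos ((adjBox_mk4_iff (by omega) (by omega) (Nat.zero_le 1) ha le_rfl
            (Nat.zero_le 1)).mpr (by omega))]
        have e1 := ih1 a 1 le_rfl (by omega)
        have e2 := ih3 (a+1) (by omega)
        have e3 := ih3 (a-1) (by omega)
        rw [ocount] at e1 e2 e3
        rw [e1, e2, e3, Bw_succ_pos m (show 1 ≤ a by omega),
          choose2_add (Bw m (a-1)) (Bw m (a+1))]
        have hcomm : Bw m (a+1) * Bw m (a-1) = Bw m (a-1) * Bw m (a+1) := Nat.mul_comm _ _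
        omega
      · -- a = 1 : three neighbours
        have ha' : a = 1 := by omega
        subst ha'
        rw [ocount, pcount_succ Hfin m _
            {mk4 1 1 0 0, mk4 2 1 1 0, mk4 1 1 1 1} ?cov,
          if_pos (hook_mem_gammaInf le_rfl)]
        case cov =>
          intro y hyS hyadj
          simp only [Finset.mem_insert, Finset.mem_singleton]
          rcases gammaInf_classify hyS with ⟨p, q, hpq, rfl⟩ | ⟨p, hp, rfl⟩ | rfl
          · rw [adjBox_mk4_iff hpq q.zero_le le_rfl le_rfl le_rfl (Nat.zero_le 1)] at hyadj
            rw [mk4_eq_iff hpq q.zero_le le_rfl le_rfl (Nat.zero_le 1) le_rfl]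
            omega
          · rw [adjBox_mk4_iff hp le_rfl (Nat.zero_le 1) le_rfl le_rfl
              (Nat.zero_le 1)] at hyadj
            rw [mk4_eq_iff hp le_rfl (Nat.zero_le 1) (by omega) le_rfl (Nat.zero_le 1)]
            omega
          · rw [adjBox_mk4_iff le_rfl le_rfl le_rfl le_rfl le_rfl (Nat.zero_le 1)] at hyadj
            rw [mk4_eq_iff le_rfl le_rfl le_rfl le_rfl le_rfl le_rfl]
            omega
        rw [Finset.sum_insert (by
            intro hmem
            simp only [Finset.mem_insert, Finset.mem_singleton] at hmem
            rcases hmem with h | h <;> exact mk4_ne (by omega) (by omega) (by omega)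
              (by omega) (by omega) (by omega) (by omega) h),
          Finset.sum_insert (by
            intro hmem
            rw [Finset.mem_singleton] at hmem
            exact mk4_ne (by omega) (by omega) (by omega) (by omega) (by omega) (by omega)
              (by omega) hmem),
          Finset.sum_singleton,
          if_pos ((adjBox_mk4_iff le_rfl (Nat.zero_le 1) le_rfl le_rfl le_rfl
            (Nat.zero_le 1)).mpr (by omega)),
          if_pos ((adjBox_mk4_iff (by omega) le_rfl (Nat.zero_le 1) le_rfl le_rfl
            (Nat.zero_le 1)).mpr (by omega)),
          if_pos ((adjBox_mk4_iff le_rfl le_rfl le_rfl le_rfl le_rfl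
            (Nat.zero_le 1)).mpr (by omega))]
        have e1 := ih1 1 1 le_rfl le_rfl
        have e2 := ih3 2 (by omega)
        have e3 := ih4
        rw [ocount] at e1 e2 e3
        rw [e1, e2, e3, Bw_succ_pos m le_rfl, show (1:ℕ) - 1 = 0 by omega,
          show (1:ℕ) + 1 = 2 by norm_num, choose2_add (Bw m 0) (Bw m 2)]
        have hcomm : Bw m 2 * Bw m 0 = Bw m 0 * Bw m 2 := Nat.mul_comm _ _
        omega
    · -- column (1,1,1,1)
      rw [ocount, pcount_succ Hfin m _ {mk4 1 1 1 0} ?cov, if_pos col4_mem_gammaInf]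
      case cov =>
        intro y hyS hyadj
        rw [Finset.mem_singleton]
        rcases gammaInf_classify hyS with ⟨p, q, hpq, rfl⟩ | ⟨p, hp, rfl⟩ | rfl
        · rw [adjBox_mk4_iff hpq q.zero_le le_rfl le_rfl le_rfl le_rfl] at hyadj
          exfalso; omega
        · rw [adjBox_mk4_iff hp le_rfl (Nat.zero_le 1) le_rfl le_rfl le_rfl] at hyadj
          rw [mk4_eq_iff hp le_rfl (Nat.zero_le 1) le_rfl le_rfl (Nat.zero_le 1)]
          omega
        · rw [adjBox_mk4_iff le_rfl le_rfl le_rfl le_rfl le_rfl le_rfl] at hyadj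
          exfalso; omega
      rw [Finset.sum_singleton,
        if_pos ((adjBox_mk4_iff le_rfl le_rfl (Nat.zero_le 1) le_rfl le_rfl le_rfl).mpr
          (by omega))]
      have e1 := ih3 1 le_rfl
      rw [ocount] at e1
      rw [e1, Bw_succ_zero]

end OscMaster
section Final
open YoungDiagram

lemma rowsEq_iff_pair {μ : YoungDiagram} {a b : ℕ} (hb : b ≤ a) :
    RowsEq μ [a, b] ↔ μ = mk4 a b 0 0 := by
  constructor
  · intro h
    refine yd_ext_rowLen fun i => ?_
    rw [h i, rowLen_mk4 hb b.zero_le le_rfl]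
    match i with
    | 0 => rfl
    | 1 => rfl
    | 2 => rfl
    | 3 => rfl
    | (n+4) => rfl
  · rintro rfl i
    rw [rowLen_mk4 hb b.zero_le le_rfl]
    match i with
    | 0 => rfl
    | 1 => rfl
    | 2 => rfl
    | 3 => rfl
    | (n+4) => rfl

lemma oscCount_eq_ocount {m a b : ℕ} (hb : b ≤ a) :
    oscCount GammaInf m [a, b] = ocount m (mk4 a b 0 0) := by
  rw [oscCount, ocount, pcount]
  exact Nat.card_congr (Equiv.subtypeEquivRight (fun f =>
    and_congr Iff.rfl (rowsEq_iff_pair hb)))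

lemma tabCount_eq_tcount {m a b : ℕ} (hb : b ≤ a) :
    tabCount (fun _ => Set.univ) m [a, b] = tcount m (mk4 a b 0 0) := by
  rw [tabCount, tcount, pcount]
  exact Nat.card_congr (Equiv.subtypeEquivRight (fun f =>
    and_congr Iff.rfl (rowsEq_iff_pair hb)))

/-- Theorem 2.1, equation (2) (`tensordim`), for `ℓ = ∞`:
for distinct two-row diagrams `λ = [λ₁,λ₂]`, `μ = [μ₁,μ₂]` of size `m`,
with `ν₁ = λ₁+μ₁-m`, `ν₂ = |λ₁-μ₁|`, the number of oscillating tableaux of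
length `m` and shape `[ν₁,ν₂]` with shapes in `Γ(∞)` equals `|𝒯(λ)| ⬝ |𝒯(μ)|`. -/
theorem osc_count_eq_tab_mul_tab_inf (m : ℕ) (hm : 1 ≤ m)
    (l₁ l₂ u₁ u₂ : ℕ)
    (hl : l₂ ≤ l₁) (hlm : l₁ + l₂ = m)
    (hu : u₂ ≤ u₁) (hum : u₁ + u₂ = m)
    (hne : (l₁, l₂) ≠ (u₁, u₂)) :
    oscCount GammaInf m [l₁ + u₁ - m, max l₁ u₁ - min l₁ u₁]
      = tabCount (fun _ => Set.univ) m [l₁, l₂]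
        * tabCount (fun _ => Set.univ) m [u₁, u₂] := by
  have hlu : l₁ ≠ u₁ := by
    intro h
    apply hne
    have h2 : l₂ = u₂ := by omega
    rw [h, h2]
  have hv2 : (1:ℕ) ≤ max l₁ u₁ - min l₁ u₁ := by omega
  have hv21 : max l₁ u₁ - min l₁ u₁ ≤ l₁ + u₁ - m := by omega
  rw [oscCount_eq_ocount hv21, tabCount_eq_tcount hl, tabCount_eq_tcount hu,
    (osc_master m).1 _ _ hv2 hv21, tab_master m l₁ l₂ hl, tab_master m u₁ u₂ hu,
    if_pos hlm, if_pos hum]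
  rcases Nat.le_total l₁ u₁ with hc | hc
  · rw [show l₁ + u₁ - m + (max l₁ u₁ - min l₁ u₁) = u₁ - u₂ by omega,
      show l₁ + u₁ - m - (max l₁ u₁ - min l₁ u₁) = l₁ - l₂ by omega,
      Nat.mul_comm]
  · rw [show l₁ + u₁ - m + (max l₁ u₁ - min l₁ u₁) = l₁ - l₂ by omega,
      show l₁ + u₁ - m - (max l₁ u₁ - min l₁ u₁) = u₁ - u₂ by omega]

end Final
end
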